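/- arXiv:2510.03937 — 3 statements merged into one kernel-verified Lean document; each statement's English description precedes it below -/
import Mathlib

section
/- For coprime positive integers m, n, the chain with p_{i,i+n} = m/(m+n) for all i, p_{i,i-m} = n/(m+n) for i >= m, and p_{ii} = n/(m+n) for i < m, is null recurrent. -/
open scoped ENNReal BigOperators
open Filter

/-- A discrete-time Markov chain on the nonnegative integers, given by its
row-stochastic transition matrix. -/
structure MarkovChain where
  p : ℕ → ℕ → ℝ≥0∞
  row_sum : ∀ i, ∑' j, p i j = 1

namespace MarkovChain

/-- `n`-step transition probabilities. -/
noncomputable def step (M : MarkovChain) : ℕ → ℕ → ℕ → ℝ≥0∞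
  | 0, i, j => if i = j then 1 else 0
  | (n+1), i, j => ∑' k, M.p i k * M.step n k j

/-- Irreducibility: every state reaches every other state with positive probability. -/
def Irreducible (M : MarkovChain) : Prop := ∀ i j, ∃ n, 0 < M.step n i j

/-- Probability, starting from `j`, that the chain reaches state `i` for the first
time at time `n` (time `0` counts iff `j = i`). -/
noncomputable def hitAt (M : MarkovChain) (i : ℕ) : ℕ → ℕ → ℝ≥0∞
  | 0, j => if j = i then 1 else 0
  | (n+1), j => if j = i then 0 else ∑' k, M.p j k * M.hitAt i n k

/-- Probability that the first return to `i` occurs at time `n + 1`. -/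
noncomputable def firstReturn (M : MarkovChain) (i n : ℕ) : ℝ≥0∞ :=
  ∑' k, M.p i k * M.hitAt i n k

/-- The chain is recurrent: return to each state is almost sure. -/
def Recurrent (M : MarkovChain) : Prop := ∀ i, ∑' n, M.firstReturn i n = 1

/-- The chain is positive recurrent: recurrent with finite expected return times. -/
def PositiveRecurrent (M : MarkovChain) : Prop :=
  M.Recurrent ∧ ∀ i, ∑' n : ℕ, ((n : ℝ≥0∞) + 1) * M.firstReturn i n < ⊤

/-- Null recurrent: recurrent but not positive recurrent. -/
def NullRecurrent (M : MarkovChain) : Prop := M.Recurrent ∧ ¬ M.PositiveRecurrent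

/-- The chain is transient: return to each state happens with probability `< 1`. -/
def Transient (M : MarkovChain) : Prop := ∀ i, ∑' n, M.firstReturn i n < 1

/-- Mean drift at state `i`. -/
noncomputable def drift (M : MarkovChain) (i : ℕ) : ℝ :=
  ∑' j, (M.p i j).toReal * ((j : ℝ) - i)

/-- The mean drift at `i` is finite (well-defined). -/
def DriftFinite (M : MarkovChain) (i : ℕ) : Prop :=
  Summable fun j => (M.p i j).toReal * ((j : ℝ) - i)

/-- Second-moment drift at state `i`. -/
noncomputable def secondMoment (M : MarkovChain) (i : ℕ) : ℝ :=
  ∑' j, (M.p i j).toReal * ((j : ℝ) - i) ^ 2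

/-- Downward uniformly bounded with bound `k`: no downward jumps longer than `k`. -/
def DownwardBounded (M : MarkovChain) (k : ℕ) : Prop :=
  ∀ i j, j + k < i → M.p i j = 0

/-- Uniformly bounded with bound `d`: no jumps longer than `d`. -/
def UniformlyBounded (M : MarkovChain) (d : ℕ) : Prop :=
  ∀ i j : ℕ, (d : ℤ) < |(i : ℤ) - j| → M.p i j = 0

end MarkovChain

namespace Stmt6Aux

noncomputable def PP (m n : ℕ) : ℝ≥0∞ := m / (m + n)
noncomputable def QQ (m n : ℕ) : ℝ≥0∞ := n / (m + n)
def dn (m j : ℕ) : ℕ := if j < m then j else j - m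
variable {m n : ℕ}

open Classical in
/-- survival (avoidance) probability. -/
noncomputable def av (m n : ℕ) (S : ℕ → Prop) : ℕ → ℕ → ℝ≥0∞
  | 0, j => if S j then 1 else 0
  | (t+1), j => if S j then PP m n * av m n S t (j + n) + QQ m n * av m n S t (dn m j) else 0

open Classical in
lemma av_succ (S : ℕ → Prop) (t j : ℕ) :
    av m n S (t+1) j
      = if S j then PP m n * av m n S t (j + n) + QQ m n * av m n S t (dn m j) else 0 := by
  rw [av]

open Classical in
lemma av_zero (S : ℕ → Prop) (j : ℕ) : av m n S 0 j = if S j then 1 else 0 := by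
  rw [av]

lemma av_of_not {S : ℕ → Prop} {j : ℕ} (h : ¬ S j) (t : ℕ) : av m n S t j = 0 := by
  cases t <;> simp [av, h]

lemma PP_le_one' : PP m n ≤ 1 := ENNReal.div_le_of_le_mul (by simp [le_add_right])
lemma QQ_le_one' : QQ m n ≤ 1 := ENNReal.div_le_of_le_mul (by simp [le_add_left])
lemma PP_add_QQ' (hm : 0 < m) : PP m n + QQ m n = 1 := by
  rw [PP, QQ, ENNReal.div_add_div_same, ENNReal.div_self (by simp [hm.ne']) (by simp)]

lemma av_le_one (hm : 0 < m) (S : ℕ → Prop) : ∀ t j, av m n S t j ≤ 1 := by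
  intro t
  induction t with
  | zero => intro j; rw [av]; split <;> simp
  | succ t ih =>
    intro j
    rw [av_succ]
    split
    · calc PP m n * av m n S t (j + n) + QQ m n * av m n S t (dn m j)
          ≤ PP m n * 1 + QQ m n * 1 := by
            gcongr <;> [exact ih _; exact ih _]
      _ = 1 := by rw [mul_one, mul_one, PP_add_QQ' hm]
    · exact zero_le_one

lemma av_succ_le (hm : 0 < m) (S : ℕ → Prop) : ∀ t j, av m n S (t + 1) j ≤ av m n S t j := by
  intro t
  induction t with
  | zero =>
    intro j
    rw [av_succ S 0 j, av_zero S j]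
    split
    · calc PP m n * av m n S 0 (j + n) + QQ m n * av m n S 0 (dn m j)
          ≤ PP m n * 1 + QQ m n * 1 := by
            exact add_le_add (mul_le_mul_right (av_le_one hm S 0 _) _)
              (mul_le_mul_right (av_le_one hm S 0 _) _)
      _ = 1 := by rw [mul_one, mul_one, PP_add_QQ' hm]
    · simp
  | succ t ih =>
    intro j
    rw [av_succ S (t+1) j, av_succ S t j]
    split
    · exact add_le_add (mul_le_mul_right (ih _) _) (mul_le_mul_right (ih _) _)
    · simp

lemma av_antitone (hm : 0 < m) (S : ℕ → Prop) (j : ℕ) : Antitone (fun t => av m n S t j) :=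
  antitone_nat_of_succ_le fun t => av_succ_le hm S t j

lemma av_mono_S {S S' : ℕ → Prop} (hSS : ∀ j, S j → S' j) : ∀ t j, av m n S t j ≤ av m n S' t j := by
  intro t
  induction t with
  | zero =>
    intro j; rw [av_zero, av_zero]
    split
    · rw [if_pos (hSS _ (by assumption))]
    · simp
  | succ t ih =>
    intro j; rw [av_succ, av_succ]
    split
    · rw [if_pos (hSS _ (by assumption))]
      gcongr <;> exact ih _
    · simp



noncomputable def FF (x : ℕ) : ℝ≥0∞ := ENNReal.ofReal (Real.log (1 + x))


lemma FF_ne_top (x : ℕ) : FF x ≠ ⊤ := ENNReal.ofReal_ne_top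

lemma FF_mono {x y : ℕ} (h : x ≤ y) : FF x ≤ FF y := by
  apply ENNReal.ofReal_le_ofReal
  apply Real.log_le_log (by positivity)
  have : (x:ℝ) ≤ y := by exact_mod_cast h
  linarith

lemma log_nonneg_nat (x : ℕ) : 0 ≤ Real.log (1 + x) :=
  Real.log_nonneg (le_add_of_nonneg_right (Nat.cast_nonneg x))

lemma PP_eq_ofReal (hm : 0 < m) : PP m n = ENNReal.ofReal ((m : ℝ) / ((m:ℝ) + n)) := by
  rw [ENNReal.ofReal_div_of_pos (by positivity), PP,
    ENNReal.ofReal_add (by positivity) (by positivity),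
    ENNReal.ofReal_natCast, ENNReal.ofReal_natCast]

lemma QQ_eq_ofReal (hm : 0 < m) : QQ m n = ENNReal.ofReal ((n : ℝ) / ((m:ℝ) + n)) := by
  rw [ENNReal.ofReal_div_of_pos (by positivity), QQ,
    ENNReal.ofReal_add (by positivity) (by positivity),
    ENNReal.ofReal_natCast, ENNReal.ofReal_natCast]

lemma concave_real (hm : 0 < m) (hn : 0 < n) {j : ℕ} (hj : m ≤ j) :
    ((m:ℝ) / ((m:ℝ)+n)) * Real.log (1 + ((j:ℕ)+n:ℕ)) + ((n:ℝ) / ((m:ℝ)+n)) * Real.log (1 + ((j-m:ℕ):ℝ))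
      ≤ Real.log (1 + j) := by
  set a : ℝ := (m:ℝ) / ((m:ℝ)+n) with ha_def
  set b : ℝ := (n:ℝ) / ((m:ℝ)+n) with hb_def
  have hmn : (0:ℝ) < (m:ℝ) + n := by positivity
  have hcc := strictConcaveOn_log_Ioi.concaveOn
  have hmR : (m:ℝ) ≤ j := by exact_mod_cast hj
  have hmem1 : (1 + ((j:ℝ)+n)) ∈ Set.Ioi (0:ℝ) := by
    simp only [Set.mem_Ioi]; positivity
  have hmem2 : (1 + ((j:ℝ)-m)) ∈ Set.Ioi (0:ℝ) := by
    simp only [Set.mem_Ioi]; linarith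
  have ha : (0:ℝ) ≤ a := by positivity
  have hb : (0:ℝ) ≤ b := by positivity
  have hab : a + b = 1 := by rw [ha_def, hb_def]; field_simp
  have hkey := hcc.2 hmem1 hmem2 ha hb hab
  rw [smul_eq_mul, smul_eq_mul, smul_eq_mul, smul_eq_mul] at hkey
  have hpt : a * (1 + ((j:ℝ)+n)) + b * (1 + ((j:ℝ)-m)) = 1 + j := by
    rw [ha_def, hb_def]; field_simp; ring
  rw [hpt] at hkey
  have hcast : ((j - m : ℕ) : ℝ) = (j:ℝ) - m := Nat.cast_sub hj
  have hcast2 : ((((j:ℕ)+n:ℕ)):ℝ) = (j:ℝ) + n := by push_cast; ring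
  rw [hcast, hcast2]
  exact hkey

lemma FF_concave (hm : 0 < m) (hn : 0 < n) {j : ℕ} (hj : m ≤ j) :
    PP m n * FF (j + n) + QQ m n * FF (j - m) ≤ FF j := by
  rw [PP_eq_ofReal hm, QQ_eq_ofReal hm, FF, FF, FF,
    ← ENNReal.ofReal_mul (by positivity), ← ENNReal.ofReal_mul (by positivity),
    ← ENNReal.ofReal_add (mul_nonneg (by positivity) (log_nonneg_nat _))
      (mul_nonneg (by positivity) (log_nonneg_nat _))]
  exact ENNReal.ofReal_le_ofReal (concave_real hm hn hj)

lemma FF_pp_step (hm : 0 < m) {N j : ℕ} (hlog : (m + n : ℝ) ≤ Real.log (2 + N))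
    (hj : N + 1 ≤ j) : PP m n * FF (j + n) ≤ FF j := by
  have h1j : (1:ℝ) ≤ 1 + (j:ℝ) := le_add_of_nonneg_right (Nat.cast_nonneg j)
  have hlogj : (m + n : ℝ) ≤ Real.log (1 + j) := by
    refine hlog.trans (Real.log_le_log (by positivity) ?_)
    have : (N:ℝ) + 1 ≤ j := by exact_mod_cast hj
    linarith
  have hmn : (0:ℝ) < (m:ℝ) + n := by positivity
  have hstep : Real.log (1 + ((j:ℝ)+n)) ≤ Real.log (1 + j) + n / (1 + j) := by
    have hpos : (0:ℝ) < 1 + j := by positivity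
    have hld : Real.log (1 + ((j:ℝ)+n)) - Real.log (1 + j)
        = Real.log ((1 + ((j:ℝ)+n)) / (1 + j)) := by
      rw [Real.log_div (by positivity) (by positivity)]
    have h2 : Real.log ((1 + ((j:ℝ)+n)) / (1 + j)) ≤ (1 + ((j:ℝ)+n)) / (1 + j) - 1 :=
      Real.log_le_sub_one_of_pos (by positivity)
    have h3 : (1 + ((j:ℝ)+n)) / (1 + j) - 1 = n / (1 + j) := by
      field_simp
      ring
    linarith
  have hfrac : (n:ℝ) / (1 + j) ≤ ((n:ℝ)/((m:ℝ)+n)) * Real.log (1 + j) := by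
    calc (n:ℝ) / (1 + j) ≤ (n:ℝ) := div_le_self (Nat.cast_nonneg n) h1j
      _ = ((n:ℝ)/((m:ℝ)+n)) * ((m:ℝ)+n) := by field_simp
      _ ≤ ((n:ℝ)/((m:ℝ)+n)) * Real.log (1 + j) :=
          mul_le_mul_of_nonneg_left hlogj (by positivity)
  have hppm : ((m:ℝ)/((m:ℝ)+n)) ≤ 1 := by
    rw [div_le_one hmn]; linarith
  have hab : (m:ℝ)/((m:ℝ)+n) + (n:ℝ)/((m:ℝ)+n) = 1 := by field_simp
  have key : ((m:ℝ) / ((m:ℝ)+n)) * Real.log (1 + ((j:ℝ)+n)) ≤ Real.log (1 + j) := by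
    have e1 : ((m:ℝ) / ((m:ℝ)+n)) * Real.log (1 + ((j:ℝ)+n))
        ≤ ((m:ℝ)/((m:ℝ)+n)) * (Real.log (1 + j) + n / (1 + j)) :=
      mul_le_mul_of_nonneg_left hstep (by positivity)
    have e2 : ((m:ℝ)/((m:ℝ)+n)) * (n / (1+j)) ≤ 1 * ((n:ℝ)/(1+j)) :=
      mul_le_mul_of_nonneg_right hppm (by positivity)
    nlinarith [hfrac, hab]
  rw [PP_eq_ofReal hm, FF, FF, ← ENNReal.ofReal_mul (by positivity)]
  apply ENNReal.ofReal_le_ofReal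
  calc ((m:ℝ) / ((m:ℝ)+n)) * Real.log (1 + ((j:ℕ)+n:ℕ))
      = ((m:ℝ) / ((m:ℝ)+n)) * Real.log (1 + ((j:ℝ)+n)) := by push_cast; ring_nf
    _ ≤ Real.log (1 + j) := key


variable {m n : ℕ}


lemma mn_ne_zero (hm : 0 < m) : ((m : ℝ≥0∞) + n) ≠ 0 := by
  simp [hm.ne']

lemma mn_ne_top : ((m : ℝ≥0∞) + n) ≠ ⊤ := by simp

lemma PP_add_QQ (hm : 0 < m) : PP m n + QQ m n = 1 := by
  rw [PP, QQ, ENNReal.div_add_div_same, ENNReal.div_self (mn_ne_zero hm) mn_ne_top]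

lemma PP_le_one : PP m n ≤ 1 :=
  ENNReal.div_le_of_le_mul (by simp [le_add_right])

lemma QQ_le_one : QQ m n ≤ 1 :=
  ENNReal.div_le_of_le_mul (by simp [le_add_left])

lemma PP_ne_top : PP m n ≠ ⊤ := (lt_of_le_of_lt PP_le_one (by simp)).ne

lemma QQ_ne_top : QQ m n ≠ ⊤ := (lt_of_le_of_lt QQ_le_one (by simp)).ne

lemma PP_ne_zero (hm : 0 < m) : PP m n ≠ 0 := by
  rw [PP]
  simp [ENNReal.div_eq_zero_iff, hm.ne']

lemma QQ_ne_zero (hn : 0 < n) : QQ m n ≠ 0 := by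
  rw [QQ]
  simp [ENNReal.div_eq_zero_iff, hn.ne']

lemma dn_le (j : ℕ) : dn m j ≤ j := by
  rw [dn]; split <;> omega

lemma dn_ne (hn : 0 < n) (j : ℕ) : dn m j ≠ j + n := by
  have := dn_le (m := m) j; omega

lemma dn_of_ge (h : m ≤ j) (hm : 0 < m) : dn m j = j - m := by
  rw [dn, if_neg (by omega)]


section Chain

variable {m n : ℕ}

lemma tsum_two (M : MarkovChain) (hn : 0 < n)
    (hp : ∀ j k, M.p j k = if k = j + n then PP m n else if k = dn m j then QQ m n else 0)
    (j : ℕ) (g : ℕ → ℝ≥0∞) :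
    ∑' k, M.p j k * g k = PP m n * g (j + n) + QQ m n * g (dn m j) := by
  have hne := dn_ne (m := m) hn j
  rw [tsum_eq_sum (s := ({j + n, dn m j} : Finset ℕ)) ?_]
  · rw [Finset.sum_insert (by simp [Ne.symm hne]), Finset.sum_singleton, hp, hp]
    rw [if_pos rfl, if_neg hne, if_pos rfl]
  · intro k hk
    simp only [Finset.mem_insert, Finset.mem_singleton, not_or] at hk
    rw [hp, if_neg hk.1, if_neg hk.2, zero_mul]

lemma hitAt_zero (M : MarkovChain) (i j : ℕ) :
    M.hitAt i 0 j = if j = i then 1 else 0 := by rw [MarkovChain.hitAt]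

lemma hitAt_succ (M : MarkovChain) (hn : 0 < n)
    (hp : ∀ j k, M.p j k = if k = j + n then PP m n else if k = dn m j then QQ m n else 0)
    (i t j : ℕ) :
    M.hitAt i (t+1) j = if j = i then 0
      else PP m n * M.hitAt i t (j + n) + QQ m n * M.hitAt i t (dn m j) := by
  rw [MarkovChain.hitAt]
  split
  · rfl
  · exact tsum_two M hn hp j _

/-- partial-sum identity: survival + cumulative hitting probability = 1. -/
lemma av_add_hit (M : MarkovChain) (hm : 0 < m) (hn : 0 < n)
    (hp : ∀ j k, M.p j k = if k = j + n then PP m n else if k = dn m j then QQ m n else 0)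
    (i : ℕ) : ∀ t j, av m n (· ≠ i) t j + ∑ s ∈ Finset.range (t+1), M.hitAt i s j = 1 := by
  intro t
  induction t with
  | zero =>
    intro j
    rw [Finset.sum_range_one, hitAt_zero, av_zero]
    by_cases h : j = i <;> simp [h]
  | succ t ih =>
    intro j
    by_cases h : j = i
    · subst h
      rw [av_of_not (by simp), Finset.sum_range_succ', hitAt_zero, if_pos rfl]
      have : ∀ s ∈ Finset.range (t+1), M.hitAt j (s+1) j = 0 := by
        intro s _
        rw [hitAt_succ M hn hp, if_pos rfl]
      rw [Finset.sum_congr rfl this]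
      simp
    · rw [Finset.sum_range_succ', hitAt_zero, if_neg h, add_zero, av_succ]
      rw [if_pos (by exact h)]
      have hrw : ∀ s ∈ Finset.range (t+1), M.hitAt i (s+1) j
          = PP m n * M.hitAt i s (j + n) + QQ m n * M.hitAt i s (dn m j) := by
        intro s _
        rw [hitAt_succ M hn hp, if_neg h]
      rw [Finset.sum_congr rfl hrw, Finset.sum_add_distrib, ← Finset.mul_sum, ← Finset.mul_sum]
      calc PP m n * av m n (· ≠ i) t (j + n) + QQ m n * av m n (· ≠ i) t (dn m j) +
            (PP m n * ∑ s ∈ Finset.range (t+1), M.hitAt i s (j+n)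
              + QQ m n * ∑ s ∈ Finset.range (t+1), M.hitAt i s (dn m j))
          = PP m n * (av m n (· ≠ i) t (j + n) + ∑ s ∈ Finset.range (t+1), M.hitAt i s (j+n))
            + QQ m n * (av m n (· ≠ i) t (dn m j) + ∑ s ∈ Finset.range (t+1), M.hitAt i s (dn m j)) := by
            ring
        _ = PP m n * 1 + QQ m n * 1 := by rw [ih, ih]
        _ = 1 := by rw [mul_one, mul_one, PP_add_QQ hm]

lemma step_le_one (M : MarkovChain) : ∀ t a b, M.step t a b ≤ 1 := by
  intro t
  induction t with
  | zero => intro a b; rw [MarkovChain.step]; split <;> simp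
  | succ t ih =>
    intro a b
    rw [MarkovChain.step]
    calc ∑' k, M.p a k * M.step t k b ≤ ∑' k, M.p a k * 1 :=
      ENNReal.tsum_le_tsum fun k => mul_le_mul_right (ih k b) _
      _ = 1 := by simp [M.row_sum a]

lemma step_le_hitsum (M : MarkovChain) (hn : 0 < n)
    (hp : ∀ j k, M.p j k = if k = j + n then PP m n else if k = dn m j then QQ m n else 0)
    (i : ℕ) : ∀ t a, M.step t a i ≤ ∑ s ∈ Finset.range (t+1), M.hitAt i s a := by
  intro t
  induction t with
  | zero =>
    intro a
    rw [Finset.sum_range_one, hitAt_zero, MarkovChain.step]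
  | succ t ih =>
    intro a
    by_cases h : a = i
    · rw [h]
      calc M.step (t+1) i i ≤ 1 := step_le_one M _ _ _
        _ ≤ _ := by
          refine le_trans ?_ (Finset.single_le_sum (f := fun s => M.hitAt i s i)
            (fun s _ => zero_le) (Finset.mem_range.2 (Nat.succ_pos _)))
          show (1:ℝ≥0∞) ≤ M.hitAt i 0 i
          rw [hitAt_zero, if_pos rfl]
    · rw [MarkovChain.step, tsum_two M hn hp]
      calc PP m n * M.step t (a+n) i + QQ m n * M.step t (dn m a) i
          ≤ PP m n * ∑ s ∈ Finset.range (t+1), M.hitAt i s (a+n)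
            + QQ m n * ∑ s ∈ Finset.range (t+1), M.hitAt i s (dn m a) :=
            add_le_add (mul_le_mul_right (ih _) _) (mul_le_mul_right (ih _) _)
        _ = ∑ s ∈ Finset.range (t+1), (PP m n * M.hitAt i s (a+n) + QQ m n * M.hitAt i s (dn m a)) := by
            rw [Finset.sum_add_distrib, Finset.mul_sum, Finset.mul_sum]
        _ = ∑ s ∈ Finset.range (t+1), M.hitAt i (s+1) a := by
            refine Finset.sum_congr rfl fun s _ => ?_
            rw [hitAt_succ M hn hp, if_neg h]
        _ ≤ ∑ s ∈ Finset.range (t+2), M.hitAt i s a := by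
            conv_rhs => rw [Finset.sum_range_succ']
            exact le_self_add

end Chain

section Lyapunov

variable {m n : ℕ}

lemma supermart (hm : 0 < m) (hn : 0 < n) {N R : ℕ} (hmN : m ≤ N)
    (hlog : (m + n : ℝ) ≤ Real.log (2 + N)) (hNR : N < R) :
    ∀ t j, N < j → FF (R+1) * av m n (N < ·) t j
      ≤ FF (R+1) * av m n (fun k => N < k ∧ k ≤ R) t j + FF j := by
  intro t
  induction t with
  | zero =>
    intro j hj
    rw [av_zero, if_pos hj, av_zero]
    by_cases hR : j ≤ R
    · rw [if_pos ⟨hj, hR⟩]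
      simpa using (le_self_add : FF (R+1) ≤ FF (R+1) + FF j)
    · rw [if_neg (by tauto)]
      simpa using (FF_mono (show R+1 ≤ j by omega))
  | succ t ih =>
    intro j hj
    by_cases hR : j ≤ R
    · have hmj : m ≤ j := by omega
      have hdn : dn m j = j - m := dn_of_ge (by omega) hm
      rw [av_succ _ t j, if_pos hj, av_succ _ t j, if_pos (⟨hj, hR⟩ : N < j ∧ j ≤ R), hdn]
      by_cases hb : N < j - m
      · calc FF (R+1) * (PP m n * av m n (N < ·) t (j + n) + QQ m n * av m n (N < ·) t (j - m))
            = PP m n * (FF (R+1) * av m n (N < ·) t (j + n))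
              + QQ m n * (FF (R+1) * av m n (N < ·) t (j - m)) := by ring
          _ ≤ PP m n * (FF (R+1) * av m n (fun k => N < k ∧ k ≤ R) t (j + n) + FF (j+n))
              + QQ m n * (FF (R+1) * av m n (fun k => N < k ∧ k ≤ R) t (j - m) + FF (j-m)) :=
              add_le_add (mul_le_mul_right (ih _ (by omega)) _)
                (mul_le_mul_right (ih _ hb) _)
          _ = FF (R+1) * (PP m n * av m n (fun k => N < k ∧ k ≤ R) t (j + n)
                + QQ m n * av m n (fun k => N < k ∧ k ≤ R) t (j - m))
              + (PP m n * FF (j+n) + QQ m n * FF (j-m)) := by ring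
          _ ≤ FF (R+1) * (PP m n * av m n (fun k => N < k ∧ k ≤ R) t (j + n)
                + QQ m n * av m n (fun k => N < k ∧ k ≤ R) t (j - m)) + FF j :=
              add_le_add_right (FF_concave hm hn hmj) _
      · rw [av_of_not (S := fun k => N < k) (j := j - m) (by simpa using hb) t]
        calc FF (R+1) * (PP m n * av m n (N < ·) t (j + n) + QQ m n * 0)
            = PP m n * (FF (R+1) * av m n (N < ·) t (j + n)) := by ring
          _ ≤ PP m n * (FF (R+1) * av m n (fun k => N < k ∧ k ≤ R) t (j + n) + FF (j+n)) :=
              mul_le_mul_right (ih _ (by omega)) _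
          _ = FF (R+1) * (PP m n * av m n (fun k => N < k ∧ k ≤ R) t (j + n))
              + PP m n * FF (j+n) := by ring
          _ ≤ FF (R+1) * (PP m n * av m n (fun k => N < k ∧ k ≤ R) t (j + n)
                + QQ m n * av m n (fun k => N < k ∧ k ≤ R) t (j - m)) + FF j := by
              refine add_le_add (mul_le_mul_right le_self_add _) ?_
              exact FF_pp_step hm hlog (by omega)
    · calc FF (R+1) * av m n (N < ·) (t+1) j ≤ FF (R+1) * 1 :=
          mul_le_mul_right (av_le_one hm _ _ _) _
        _ ≤ FF j := by rw [mul_one]; exact FF_mono (by omega)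
        _ ≤ _ := le_add_self

lemma band_up (hm : 0 < m) {N R : ℕ} :
    ∀ s j, R < j + s * n → av m n (fun k => N < k ∧ k ≤ R) s j + PP m n ^ s ≤ 1 := by
  intro s
  induction s with
  | zero =>
    intro j hjs
    rw [av_zero, if_neg (by omega), zero_add, pow_zero]
  | succ s ih =>
    intro j hjs
    by_cases hb : N < j ∧ j ≤ R
    · rw [av_succ]
      rw [if_pos hb]
      calc PP m n * av m n (fun k => N < k ∧ k ≤ R) s (j + n)
            + QQ m n * av m n (fun k => N < k ∧ k ≤ R) s (dn m j) + PP m n ^ (s+1)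
          = PP m n * (av m n (fun k => N < k ∧ k ≤ R) s (j + n) + PP m n ^ s)
            + QQ m n * av m n (fun k => N < k ∧ k ≤ R) s (dn m j) := by ring
        _ ≤ PP m n * 1 + QQ m n * 1 :=
            add_le_add (mul_le_mul_right (ih _ (by
              have h' : (s+1)*n = s*n + n := by ring
              omega)) _)
              (mul_le_mul_right (av_le_one hm _ _ _) _)
        _ = 1 := by rw [mul_one, mul_one, PP_add_QQ hm]
    · rw [av_of_not hb, zero_add]
      exact pow_le_one' PP_le_one _
end Lyapunov

section Decay

variable {m n : ℕ}

lemma band_geom (hm : 0 < m) {N R s : ℕ} {c : ℝ≥0∞}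
    (hc : ∀ k, (N < k ∧ k ≤ R) → av m n (fun k => N < k ∧ k ≤ R) s k ≤ c) :
    ∀ t j, av m n (fun k => N < k ∧ k ≤ R) (t + s) j
      ≤ c * av m n (fun k => N < k ∧ k ≤ R) t j := by
  intro t
  induction t with
  | zero =>
    intro j
    by_cases hb : N < j ∧ j ≤ R
    · rw [av_zero, if_pos hb, mul_one, zero_add]
      exact hc j hb
    · rw [zero_add, av_of_not hb, av_of_not hb, mul_zero]
  | succ t ih =>
    intro j
    have harith : t + 1 + s = (t + s) + 1 := by omega
    rw [harith, av_succ, av_succ]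
    by_cases hb : N < j ∧ j ≤ R
    · rw [if_pos hb, if_pos hb]
      calc PP m n * av m n (fun k => N < k ∧ k ≤ R) (t+s) (j + n)
            + QQ m n * av m n (fun k => N < k ∧ k ≤ R) (t+s) (dn m j)
          ≤ PP m n * (c * av m n (fun k => N < k ∧ k ≤ R) t (j + n))
            + QQ m n * (c * av m n (fun k => N < k ∧ k ≤ R) t (dn m j)) :=
            add_le_add (mul_le_mul_right (ih _) _) (mul_le_mul_right (ih _) _)
        _ = c * (PP m n * av m n (fun k => N < k ∧ k ≤ R) t (j + n)
            + QQ m n * av m n (fun k => N < k ∧ k ≤ R) t (dn m j)) := by ring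
    · rw [if_neg hb, if_neg hb, mul_zero]

lemma band_iInf (hm : 0 < m) (hn : 0 < n) {N R : ℕ} (hNR : N < R) (j : ℕ) :
    ⨅ t, av m n (fun k => N < k ∧ k ≤ R) t j = 0 := by
  set s := R - N with hs
  set c : ℝ≥0∞ := 1 - PP m n ^ s with hcdef
  have hc : ∀ k, (N < k ∧ k ≤ R) → av m n (fun k => N < k ∧ k ≤ R) s k ≤ c := by
    intro k hk
    apply ENNReal.le_sub_of_add_le_right (ENNReal.pow_ne_top PP_ne_top)
    apply band_up hm
    have : R - N ≤ s * n := by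
      calc R - N ≤ s * 1 := by omega
        _ ≤ s * n := Nat.mul_le_mul_left _ hn
    omega
  have hdecay : ∀ u j, av m n (fun k => N < k ∧ k ≤ R) (u * s) j ≤ c ^ u := by
    intro u
    induction u with
    | zero => intro j; rw [zero_mul, pow_zero]; exact av_le_one hm _ _ _
    | succ u ih =>
      intro j
      have : (u + 1) * s = u * s + s := by ring
      rw [this, pow_succ]
      calc av m n (fun k => N < k ∧ k ≤ R) (u * s + s) j
          ≤ c * av m n (fun k => N < k ∧ k ≤ R) (u * s) j := band_geom hm hc _ _
        _ ≤ c * c ^ u := mul_le_mul_right (ih _) _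
        _ = c ^ u * c := mul_comm _ _
  have hclt : c < 1 := by
    rw [hcdef]
    refine ENNReal.sub_lt_self (by simp) (by simp) ?_
    exact pow_ne_zero s (PP_ne_zero hm)
  have hpow : Filter.Tendsto (fun u => c ^ u) atTop (nhds 0) :=
    ENNReal.tendsto_pow_atTop_nhds_zero_of_lt_one hclt
  refine le_antisymm ?_ (zero_le)
  have hanti : Antitone fun u => c ^ u := fun a b hab =>
    pow_le_pow_right_of_le_one' hclt.le hab
  have : (⨅ u, c ^ u) = 0 := tendsto_nhds_unique (tendsto_atTop_iInf hanti) hpow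
  rw [← this]
  exact le_iInf fun u => iInf_le_of_le (u * s) (hdecay u j)

lemma D_iInf (hm : 0 < m) (hn : 0 < n) {N : ℕ} (hmN : m ≤ N)
    (hlog : (m + n : ℝ) ≤ Real.log (2 + N)) (j : ℕ) :
    ⨅ t, av m n (N < ·) t j = 0 := by
  by_cases hj : N < j
  swap
  · refine le_antisymm (le_trans (iInf_le _ 0) ?_) (zero_le)
    rw [av_of_not (by simpa using hj)]
  set I := ⨅ t, av m n (N < ·) t j with hI
  have key : ∀ R, N < R → FF (R+1) * I ≤ FF j := by
    intro R hNR
    have htendB : Filter.Tendsto (fun t => av m n (fun k => N < k ∧ k ≤ R) t j) atTop (nhds 0) := by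
      rw [← band_iInf hm hn hNR j]
      exact tendsto_atTop_iInf (av_antitone hm _ j)
    have htend : Filter.Tendsto
        (fun t => FF (R+1) * av m n (fun k => N < k ∧ k ≤ R) t j + FF j) atTop
        (nhds (FF j)) := by
      have h1 : Filter.Tendsto (fun t => FF (R+1) * av m n (fun k => N < k ∧ k ≤ R) t j)
          atTop (nhds 0) := by
        have := ENNReal.Tendsto.const_mul htendB (Or.inr (FF_ne_top (R+1)))
        simpa using this
      simpa using h1.add tendsto_const_nhds
    refine ge_of_tendsto' htend fun t => ?_
    calc FF (R+1) * I ≤ FF (R+1) * av m n (N < ·) t j :=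
        mul_le_mul_right (iInf_le _ t) _
      _ ≤ _ := supermart hm hn hmN hlog hNR t j hj
  by_contra hI0
  have hIne : I ≠ 0 := hI0
  set K : ℝ≥0∞ := FF j / I with hK
  have hKlt : K < ⊤ := ENNReal.div_lt_top (FF_ne_top j) hIne
  have hbound : ∀ R, N < R → FF (R+1) ≤ K := by
    intro R hNR
    rw [hK, ENNReal.le_div_iff_mul_le (Or.inl hIne) (Or.inr (FF_ne_top j))]
    exact key R hNR
  set R : ℕ := N + 1 + Nat.ceil (Real.exp (K.toReal + 1)) with hR
  have hNR : N < R := by omega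
  have hexp : Real.exp (K.toReal + 1) ≤ (R : ℝ) + 1 := by
    calc Real.exp (K.toReal + 1) ≤ (Nat.ceil (Real.exp (K.toReal + 1)) : ℝ) := Nat.le_ceil _
      _ ≤ (R : ℝ) + 1 := by
        have : Nat.ceil (Real.exp (K.toReal + 1)) ≤ R := by omega
        exact_mod_cast Nat.le_succ_of_le this
  have hKF : K < FF (R+1) := by
    have h1 : K.toReal + 1 ≤ Real.log (1 + ((R:ℕ)+1:ℕ)) := by
      rw [← Real.log_exp (K.toReal + 1)]
      apply Real.log_le_log (Real.exp_pos _)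
      push_cast
      linarith
    calc K = ENNReal.ofReal K.toReal := (ENNReal.ofReal_toReal hKlt.ne).symm
      _ < ENNReal.ofReal (K.toReal + 1) := by
        rw [ENNReal.ofReal_lt_ofReal_iff (by positivity)]
        linarith
      _ ≤ FF (R+1) := ENNReal.ofReal_le_ofReal h1
  exact absurd (hbound R hNR) (not_le.2 hKF)

end Decay

section Recur

variable {m n : ℕ}

noncomputable def gfun (m n i j : ℕ) : ℝ≥0∞ := ⨅ t, av m n (· ≠ i) t j

lemma gfun_le (i j t : ℕ) : gfun m n i j ≤ av m n (· ≠ i) t j := iInf_le _ t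

lemma gfun_le_one (hm : 0 < m) (i j : ℕ) : gfun m n i j ≤ 1 :=
  (gfun_le i j 0).trans (av_le_one hm _ _ _)

lemma gfun_self (i : ℕ) : gfun m n i i = 0 :=
  le_antisymm ((gfun_le i i 0).trans_eq (av_of_not (by simp) 0)) (zero_le)

lemma gfun_tendsto (hm : 0 < m) (i j : ℕ) :
    Filter.Tendsto (fun t => av m n (· ≠ i) t j) atTop (nhds (gfun m n i j)) :=
  tendsto_atTop_iInf (av_antitone hm _ j)

lemma gfun_rec (hm : 0 < m) {i j : ℕ} (hij : j ≠ i) :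
    gfun m n i j = PP m n * gfun m n i (j + n) + QQ m n * gfun m n i (dn m j) := by
  have h1 : Filter.Tendsto (fun t => av m n (· ≠ i) (t+1) j) atTop (nhds (gfun m n i j)) :=
    (gfun_tendsto hm i j).comp (tendsto_add_atTop_nat 1)
  have h2 : Filter.Tendsto
      (fun t => PP m n * av m n (· ≠ i) t (j + n) + QQ m n * av m n (· ≠ i) t (dn m j)) atTop
      (nhds (PP m n * gfun m n i (j + n) + QQ m n * gfun m n i (dn m j))) := by
    exact (ENNReal.Tendsto.const_mul (gfun_tendsto hm i (j+n)) (Or.inr PP_ne_top)).add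
      (ENNReal.Tendsto.const_mul (gfun_tendsto hm i (dn m j)) (Or.inr QQ_ne_top))
  have heq : (fun t => av m n (· ≠ i) (t+1) j)
      = fun t => PP m n * av m n (· ≠ i) t (j + n) + QQ m n * av m n (· ≠ i) t (dn m j) := by
    funext t
    rw [av_succ, if_pos hij]
  rw [heq] at h1
  exact tendsto_nhds_unique h1 h2

lemma gfun_le_gamma (hm : 0 < m) (hn : 0 < n) {N : ℕ} (hmN : m ≤ N)
    (hlog : (m + n : ℝ) ≤ Real.log (2 + N)) (i : ℕ) (j : ℕ) :
    gfun m n i j ≤ (Finset.range (N+1)).sup (gfun m n i) := by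
  set γ := (Finset.range (N+1)).sup (gfun m n i) with hγ
  have claim : ∀ t j, gfun m n i j ≤ av m n (N < ·) t j + γ := by
    intro t
    induction t with
    | zero =>
      intro j
      by_cases hj : N < j
      · rw [av_zero, if_pos hj]
        exact le_add_right (gfun_le_one hm i j)
      · exact le_add_left (Finset.le_sup (Finset.mem_range.2 (by omega)))
    | succ t ih =>
      intro j
      by_cases hj : N < j
      · by_cases hij : j = i
        · rw [hij, gfun_self]; exact zero_le
        · rw [gfun_rec hm hij, av_succ, if_pos hj]
          calc PP m n * gfun m n i (j + n) + QQ m n * gfun m n i (dn m j)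
              ≤ PP m n * (av m n (N < ·) t (j+n) + γ) + QQ m n * (av m n (N < ·) t (dn m j) + γ) :=
                add_le_add (mul_le_mul_right (ih _) _) (mul_le_mul_right (ih _) _)
            _ = (PP m n * av m n (N < ·) t (j+n) + QQ m n * av m n (N < ·) t (dn m j))
                + (PP m n + QQ m n) * γ := by ring
            _ = _ := by rw [PP_add_QQ hm]; ring
      · exact le_add_left (Finset.le_sup (Finset.mem_range.2 (by omega)))
  have htend : Filter.Tendsto (fun t => av m n (N < ·) t j + γ) atTop (nhds γ) := by
    have h0 : Filter.Tendsto (fun t => av m n (N < ·) t j) atTop (nhds 0) := by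
      rw [← D_iInf hm hn hmN hlog j]
      exact tendsto_atTop_iInf (av_antitone hm _ j)
    simpa using h0.add tendsto_const_nhds
  exact ge_of_tendsto' htend fun t => claim t j

lemma gfun_zero (M : MarkovChain) (hm : 0 < m) (hn : 0 < n)
    (hp : ∀ j k, M.p j k = if k = j + n then PP m n else if k = dn m j then QQ m n else 0)
    (hirr : M.Irreducible) (i : ℕ) : ∀ j, gfun m n i j = 0 := by
  set N : ℕ := m + Nat.ceil (Real.exp (m + n)) with hN
  have hmN : m ≤ N := by omega
  have hlog : (m + n : ℝ) ≤ Real.log (2 + N) := by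
    rw [← Real.log_exp ((m:ℝ) + n)]
    apply Real.log_le_log (Real.exp_pos _)
    calc Real.exp ((m:ℝ) + n) ≤ (Nat.ceil (Real.exp ((m:ℝ)+n)) : ℝ) := Nat.le_ceil _
      _ ≤ 2 + (N:ℝ) := by
        have : Nat.ceil (Real.exp ((m:ℝ)+n)) ≤ N := by
          rw [hN]
          have : Real.exp ((m:ℝ)+n) = Real.exp (((m+n:ℕ):ℝ)) := by push_cast; ring_nf
          rw [this] at *
          omega
        have h2 : ((Nat.ceil (Real.exp ((m:ℝ)+n)) : ℕ) : ℝ) ≤ (N:ℝ) := Nat.cast_le.2 this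
        linarith
  set γ := (Finset.range (N+1)).sup (gfun m n i) with hγ
  have hle : ∀ j, gfun m n i j ≤ γ := fun j => gfun_le_gamma hm hn hmN hlog i j
  have hγ0 : γ = 0 := by
    by_contra hγne
    obtain ⟨a, hamem, hasup⟩ := Finset.exists_mem_eq_sup (Finset.range (N+1))
      ⟨0, Finset.mem_range.2 (by omega)⟩ (gfun m n i)
    -- iterate one avoidance block: gfun j ≤ av t j * γ
    have claim : ∀ t j, gfun m n i j ≤ av m n (· ≠ i) t j * γ := by
      intro t
      induction t with
      | zero =>
        intro j
        by_cases hij : j = i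
        · rw [hij, gfun_self]; exact zero_le
        · rw [av_zero, if_pos hij, one_mul]; exact hle j
      | succ t ih =>
        intro j
        by_cases hij : j = i
        · rw [hij, gfun_self]; exact zero_le
        · rw [gfun_rec hm hij, av_succ, if_pos hij]
          calc PP m n * gfun m n i (j + n) + QQ m n * gfun m n i (dn m j)
              ≤ PP m n * (av m n (· ≠ i) t (j+n) * γ) + QQ m n * (av m n (· ≠ i) t (dn m j) * γ) :=
                add_le_add (mul_le_mul_right (ih _) _) (mul_le_mul_right (ih _) _)
            _ = (PP m n * av m n (· ≠ i) t (j+n) + QQ m n * av m n (· ≠ i) t (dn m j)) * γ := by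
                ring
    obtain ⟨t, ht⟩ := hirr a i
    have hstep : M.step t a i ≤ ∑ s ∈ Finset.range (t+1), M.hitAt i s a :=
      step_le_hitsum M hn hp i t a
    have hsum : av m n (· ≠ i) t a + ∑ s ∈ Finset.range (t+1), M.hitAt i s a = 1 :=
      av_add_hit M hm hn hp i t a
    have havlt : av m n (· ≠ i) t a < 1 := by
      rcases lt_or_ge (av m n (· ≠ i) t a) 1 with h | h
      · exact h
      · exfalso
        have h1 : av m n (· ≠ i) t a = 1 :=
          le_antisymm (av_le_one hm _ _ _) h
        rw [h1] at hsum
        have : ∑ s ∈ Finset.range (t+1), M.hitAt i s a = 0 := by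
          have h2 : (1:ℝ≥0∞) + ∑ s ∈ Finset.range (t+1), M.hitAt i s a = 1 + 0 := by
            simpa using hsum
          exact (ENNReal.add_right_inj (by simp)).1 h2
        rw [this] at hstep
        exact absurd (le_antisymm hstep (zero_le)) ht.ne'
    have hγtop : γ ≠ ⊤ := by
      have : γ ≤ 1 := Finset.sup_le fun b _ => gfun_le_one hm i b
      exact (this.trans_lt (by simp)).ne
    have : γ < γ := by
      calc γ = gfun m n i a := hasup
        _ ≤ av m n (· ≠ i) t a * γ := claim t a
        _ < 1 * γ := ENNReal.mul_lt_mul_left hγne hγtop havlt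
        _ = γ := one_mul γ
    exact absurd this (lt_irrefl γ)
  intro j
  exact le_antisymm ((hle j).trans_eq hγ0) (zero_le)

lemma hitsum_one (M : MarkovChain) (hm : 0 < m) (hn : 0 < n)
    (hp : ∀ j k, M.p j k = if k = j + n then PP m n else if k = dn m j then QQ m n else 0)
    (hirr : M.Irreducible) (i j : ℕ) : ∑' s, M.hitAt i s j = 1 := by
  have hg := gfun_zero M hm hn hp hirr i j
  have htendav : Filter.Tendsto (fun t => av m n (· ≠ i) t j) atTop (nhds 0) := by
    rw [← hg]; exact gfun_tendsto hm i j
  have htendsum : Filter.Tendsto (fun t => ∑ s ∈ Finset.range (t+1), M.hitAt i s j) atTop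
      (nhds (∑' s, M.hitAt i s j)) :=
    (ENNReal.tendsto_nat_tsum _).comp (tendsto_add_atTop_nat 1)
  have := htendav.add htendsum
  rw [zero_add] at this
  have hconst : (fun t => av m n (· ≠ i) t j + ∑ s ∈ Finset.range (t+1), M.hitAt i s j)
      = fun _ => (1:ℝ≥0∞) := by
    funext t; exact av_add_hit M hm hn hp i t j
  rw [hconst] at this
  exact tendsto_nhds_unique this tendsto_const_nhds

lemma recurrent_of (M : MarkovChain) (hm : 0 < m) (hn : 0 < n)
    (hp : ∀ j k, M.p j k = if k = j + n then PP m n else if k = dn m j then QQ m n else 0)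
    (hirr : M.Irreducible) : M.Recurrent := by
  intro i
  have : ∑' t, M.firstReturn i t = ∑' t, ∑' k, M.p i k * M.hitAt i t k := rfl
  rw [this, ENNReal.tsum_comm]
  calc ∑' k, ∑' t, M.p i k * M.hitAt i t k
      = ∑' k, M.p i k * ∑' t, M.hitAt i t k := by
        refine tsum_congr fun k => ?_
        rw [ENNReal.tsum_mul_left]
    _ = ∑' k, M.p i k * 1 := by
        refine tsum_congr fun k => ?_
        rw [hitsum_one M hm hn hp hirr i k]
    _ = 1 := by simpa using M.row_sum i

end Recur

section Wald

variable {m n : ℕ}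

lemma mart_id (hm : 0 < m) {j : ℕ} (hj : m ≤ j) :
    PP m n * ((j + n : ℕ) : ℝ≥0∞) + QQ m n * ((j - m : ℕ) : ℝ≥0∞) = (j : ℝ≥0∞) := by
  obtain ⟨d, rfl⟩ : ∃ d, j = m + d := ⟨j - m, (Nat.add_sub_cancel' hj).symm⟩
  have hd : m + d - m = d := by omega
  rw [hd, PP, QQ]
  have key : ∀ a b : ℝ≥0∞, a / ((m:ℝ≥0∞)+n) * b = a * b / ((m:ℝ≥0∞)+n) := fun a b => by
    rw [div_eq_mul_inv, div_eq_mul_inv]; ring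
  rw [key, key, ENNReal.div_add_div_same]
  have hnum : (m:ℝ≥0∞) * ((m + d + n : ℕ) : ℝ≥0∞) + (n:ℝ≥0∞) * ((d:ℕ):ℝ≥0∞)
      = ((m:ℝ≥0∞) + n) * ((m + d : ℕ) : ℝ≥0∞) := by
    push_cast
    ring
  rw [hnum, mul_div_assoc, ENNReal.mul_div_cancel' (by simp [hm.ne']) (by simp)]

lemma wald (hm : 0 < m) (hn : 0 < n) {i0 : ℕ} (hmi : m ≤ i0 + 1) :
    ∀ (t j : ℕ), (j:ℝ≥0∞) ≤ ((j + t*n : ℕ) : ℝ≥0∞) * av m n (i0 < ·) t j + (i0:ℝ≥0∞) := by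
  intro t
  induction t with
  | zero =>
    intro j
    by_cases hj : i0 < j
    · rw [av_zero, if_pos hj]
      simp only [Nat.zero_mul, Nat.add_zero, mul_one]
      exact le_self_add
    · exact le_add_left (Nat.cast_le.2 (by omega))
  | succ t ih =>
    intro j
    by_cases hj : i0 < j
    · have hmj : m ≤ j := by omega
      have hdn : dn m j = j - m := dn_of_ge hmj hm
      have hc1 : (j + n) + t*n = j + (t+1)*n := by ring
      have hc2 : (((j - m) + t*n : ℕ):ℝ≥0∞) ≤ ((j + (t+1)*n : ℕ):ℝ≥0∞) := by
        apply Nat.cast_le.2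
        have h' : (t+1)*n = t*n + n := by ring
        omega
      rw [av_succ, if_pos hj, hdn]
      calc (j:ℝ≥0∞) = PP m n * ((j + n : ℕ) : ℝ≥0∞) + QQ m n * ((j - m : ℕ) : ℝ≥0∞) :=
          (mart_id hm hmj).symm
        _ ≤ PP m n * (((j + n) + t*n : ℕ) * av m n (i0 < ·) t (j+n) + (i0:ℝ≥0∞))
            + QQ m n * (((j - m) + t*n : ℕ) * av m n (i0 < ·) t (j-m) + (i0:ℝ≥0∞)) :=
            add_le_add (mul_le_mul_right (ih (j+n)) _) (mul_le_mul_right (ih (j-m)) _)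
        _ = (((j + n) + t*n : ℕ) : ℝ≥0∞) * (PP m n * av m n (i0 < ·) t (j+n))
            + (((j - m) + t*n : ℕ) : ℝ≥0∞) * (QQ m n * av m n (i0 < ·) t (j-m))
            + (PP m n + QQ m n) * (i0:ℝ≥0∞) := by ring
        _ ≤ ((j + (t+1)*n : ℕ) : ℝ≥0∞) * (PP m n * av m n (i0 < ·) t (j+n))
            + ((j + (t+1)*n : ℕ) : ℝ≥0∞) * (QQ m n * av m n (i0 < ·) t (j-m))
            + 1 * (i0:ℝ≥0∞) := by
            rw [PP_add_QQ hm, hc1]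
            exact add_le_add (add_le_add le_rfl (mul_le_mul_left hc2 _)) le_rfl
        _ = ((j + (t+1)*n : ℕ) : ℝ≥0∞)
            * (PP m n * av m n (i0 < ·) t (j+n) + QQ m n * av m n (i0 < ·) t (j-m))
            + (i0:ℝ≥0∞) := by ring
    · exact le_add_left (Nat.cast_le.2 (by omega))

lemma Dlow (hm : 0 < m) (hn : 0 < n) {i0 : ℕ} (hmi : m ≤ i0 + 1) (t : ℕ) :
    (n:ℝ≥0∞) / ((i0 + n + t*n : ℕ) : ℝ≥0∞) ≤ av m n (i0 < ·) t (i0 + n) := by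
  have hw := wald hm hn hmi t (i0 + n)
  have hcast : ((i0 + n : ℕ):ℝ≥0∞) = (n:ℝ≥0∞) + (i0:ℝ≥0∞) := by push_cast; ring
  rw [hcast] at hw
  have hn' : (n:ℝ≥0∞) ≤ ((i0 + n + t*n : ℕ) : ℝ≥0∞) * av m n (i0 < ·) t (i0 + n) := by
    exact (ENNReal.add_le_add_iff_right (a := (i0:ℝ≥0∞)) (by simp)).1 hw
  exact ENNReal.div_le_of_le_mul (by rwa [mul_comm] at hn')

lemma harmonic_top (hn : 0 < n) (i0 : ℕ) :
    ∑' t : ℕ, (n:ℝ≥0∞) / ((i0 + n + t*n : ℕ) : ℝ≥0∞) = ⊤ := by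
  by_contra hne
  set gnn : ℕ → NNReal := fun t => (n : NNReal) / ((i0 + n + t*n : ℕ) : NNReal) with hgnn
  have hcoe : ∀ t, ((gnn t : ℝ≥0∞)) = (n:ℝ≥0∞) / ((i0 + n + t*n : ℕ) : ℝ≥0∞) := by
    intro t
    rw [hgnn, ENNReal.coe_div (by positivity)]
    norm_cast
  have hsum : Summable gnn := by
    rw [← ENNReal.tsum_coe_ne_top_iff_summable]
    intro h
    apply hne
    rw [← h]
    exact tsum_congr fun t => (hcoe t).symm
  have hsumR : Summable fun t => ((gnn t : ℝ)) := NNReal.summable_coe.2 hsum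
  have hval : ∀ t, ((gnn t : ℝ)) = (n:ℝ) / ((i0 + n + t*n : ℕ) : ℝ) := by
    intro t
    rw [hgnn]
    push_cast
    ring
  have hc : (0:ℝ) < (n:ℝ) / ((i0:ℝ) + n) := by positivity
  have hsmall : Summable fun t : ℕ => ((n:ℝ)/((i0:ℝ)+n)) * (1/((t:ℝ)+1)) := by
    apply Summable.of_nonneg_of_le (fun t => by positivity) _ hsumR
    intro t
    rw [hval]
    have hXle : ((i0 + n + t*n : ℕ) : ℝ) ≤ ((i0:ℝ)+n) * ((t:ℝ)+1) := by
      have hnat : i0 + n + t*n ≤ (i0+n) * (t+1) := by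
        have : t*n ≤ t*(i0+n) := Nat.mul_le_mul_left t (by omega)
        have h2 : (i0+n)*(t+1) = (i0+n)*t + (i0+n) := by ring
        have h3 : t*(i0+n) = (i0+n)*t := by ring
        omega
      calc ((i0 + n + t*n : ℕ) : ℝ) ≤ (((i0+n) * (t+1) : ℕ) : ℝ) := Nat.cast_le.2 hnat
        _ = ((i0:ℝ)+n) * ((t:ℝ)+1) := by push_cast; ring
    have hXpos : (0:ℝ) < ((i0 + n + t*n : ℕ) : ℝ) := by
      have : 0 < i0 + n + t*n := by omega
      exact_mod_cast this
    calc ((n:ℝ)/((i0:ℝ)+n)) * (1/((t:ℝ)+1)) = (n:ℝ) / (((i0:ℝ)+n) * ((t:ℝ)+1)) := by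
          rw [div_mul_div_comm, mul_one]
      _ ≤ (n:ℝ) / ((i0 + n + t*n : ℕ) : ℝ) :=
          div_le_div_of_nonneg_left (Nat.cast_nonneg n) hXpos hXle
  have hharm : Summable fun t : ℕ => 1/((t:ℝ)+1) :=
    (summable_mul_left_iff hc.ne').1 hsmall
  have : Summable fun t : ℕ => 1/((t+1 : ℕ):ℝ) := by
    convert hharm using 2 with t
    push_cast
    ring
  exact Real.not_summable_one_div_natCast ((summable_nat_add_iff 1).1 this)

end Wald

section Final

variable {m n : ℕ}

lemma expret_top (M : MarkovChain) (hm : 0 < m) (hn : 0 < n)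
    (hp : ∀ j k, M.p j k = if k = j + n then PP m n else if k = dn m j then QQ m n else 0)
    (hirr : M.Irreducible) :
    ∑' t : ℕ, ((t:ℝ≥0∞) + 1) * M.firstReturn m t = ⊤ := by
  set i0 : ℕ := m with hi0
  set FR : ℕ → ℝ≥0∞ := M.firstReturn i0 with hFRdef
  have hFR : ∀ s, FR s = PP m n * M.hitAt i0 s (i0 + n) + QQ m n * M.hitAt i0 s (dn m i0) :=
    fun s => tsum_two M hn hp i0 _
  have head_id : ∀ t, ∑ s ∈ Finset.range (t+1), FR s
      + (PP m n * av m n (· ≠ i0) t (i0+n) + QQ m n * av m n (· ≠ i0) t (dn m i0)) = 1 := by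
    intro t
    have hsum : ∑ s ∈ Finset.range (t+1), FR s
        = PP m n * ∑ s ∈ Finset.range (t+1), M.hitAt i0 s (i0+n)
          + QQ m n * ∑ s ∈ Finset.range (t+1), M.hitAt i0 s (dn m i0) := by
      rw [Finset.sum_congr rfl fun s _ => hFR s, Finset.sum_add_distrib,
        ← Finset.mul_sum, ← Finset.mul_sum]
    rw [hsum]
    calc PP m n * ∑ s ∈ Finset.range (t+1), M.hitAt i0 s (i0+n)
          + QQ m n * ∑ s ∈ Finset.range (t+1), M.hitAt i0 s (dn m i0)
          + (PP m n * av m n (· ≠ i0) t (i0+n) + QQ m n * av m n (· ≠ i0) t (dn m i0))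
        = PP m n * (av m n (· ≠ i0) t (i0+n) + ∑ s ∈ Finset.range (t+1), M.hitAt i0 s (i0+n))
          + QQ m n * (av m n (· ≠ i0) t (dn m i0)
            + ∑ s ∈ Finset.range (t+1), M.hitAt i0 s (dn m i0)) := by ring
      _ = PP m n * 1 + QQ m n * 1 := by
          rw [av_add_hit M hm hn hp, av_add_hit M hm hn hp]
      _ = 1 := by rw [mul_one, mul_one, PP_add_QQ hm]
  have total : ∑' s, FR s = 1 := recurrent_of M hm hn hp hirr i0
  set T : ℕ → ℝ≥0∞ := fun r => ∑' s, if r ≤ s then FR s else 0 with hT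
  have split_id : ∀ r, ∑ s ∈ Finset.range r, FR s + T r = 1 := by
    intro r
    have hpt : ∀ s, FR s = (if s < r then FR s else 0) + (if r ≤ s then FR s else 0) := by
      intro s
      by_cases h : s < r
      · rw [if_pos h, if_neg (by omega), add_zero]
      · rw [if_neg h, if_pos (by omega), zero_add]
    have h1 : ∑' s, FR s = ∑' s, ((if s < r then FR s else 0) + (if r ≤ s then FR s else 0)) :=
      tsum_congr hpt
    rw [ENNReal.tsum_add] at h1
    have h2 : ∑' s, (if s < r then FR s else 0) = ∑ s ∈ Finset.range r, FR s := by
      rw [tsum_eq_sum (s := Finset.range r) (fun s hs => if_neg (by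
        simp only [Finset.mem_range] at hs; omega))]
      exact Finset.sum_congr rfl fun s hs => if_pos (Finset.mem_range.1 hs)
    rw [h2] at h1
    rw [← h1, total]
  have tail_eq : ∀ t, T (t+1)
      = PP m n * av m n (· ≠ i0) t (i0+n) + QQ m n * av m n (· ≠ i0) t (dn m i0) := by
    intro t
    have h1 := split_id (t+1)
    have h2 := head_id t
    have hhead_ne : ∑ s ∈ Finset.range (t+1), FR s ≠ ⊤ := by
      intro htop
      rw [htop] at h1
      simp at h1
    rw [← h2] at h1
    exact (ENNReal.add_right_inj hhead_ne).1 h1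
  have tail_ge : ∀ t, PP m n * ((n:ℝ≥0∞) / ((i0 + n + t*n : ℕ) : ℝ≥0∞)) ≤ T (t+1) := by
    intro t
    rw [tail_eq t]
    calc PP m n * ((n:ℝ≥0∞) / ((i0 + n + t*n : ℕ) : ℝ≥0∞))
        ≤ PP m n * av m n (i0 < ·) t (i0+n) :=
          mul_le_mul_right (Dlow hm hn (by omega) t) _
      _ ≤ PP m n * av m n (· ≠ i0) t (i0+n) :=
          mul_le_mul_right (av_mono_S (fun k hk => by omega) t _) _
      _ ≤ _ := le_self_add
  have partial_le : ∀ K, ∑ r ∈ Finset.range K, T r ≤ ∑' s : ℕ, ((s:ℝ≥0∞) + 1) * FR s := by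
    intro K
    have hswap : ∑ r ∈ Finset.range K, T r
        = ∑' s, ∑ r ∈ Finset.range K, (if r ≤ s then FR s else 0) :=
      (Summable.tsum_finsetSum fun _ _ => ENNReal.summable).symm
    rw [hswap]
    refine ENNReal.tsum_le_tsum fun s => ?_
    have hfilter : ∑ r ∈ Finset.range K, (if r ≤ s then FR s else 0)
        = ((Finset.range K).filter (fun r => r ≤ s)).card • FR s := by
      rw [← Finset.sum_filter, Finset.sum_const]
    rw [hfilter]
    have hcard : ((Finset.range K).filter (fun r => r ≤ s)).card ≤ s + 1 := by
      have hsub : (Finset.range K).filter (fun r => r ≤ s) ⊆ Finset.range (s+1) := by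
        intro r hr
        simp only [Finset.mem_filter, Finset.mem_range] at hr ⊢
        omega
      calc _ ≤ (Finset.range (s+1)).card := Finset.card_le_card hsub
        _ = s + 1 := Finset.card_range _
    rw [nsmul_eq_mul]
    apply mul_le_mul_left
    calc (((Finset.range K).filter (fun r => r ≤ s)).card : ℝ≥0∞)
        ≤ ((s + 1 : ℕ) : ℝ≥0∞) := Nat.cast_le.2 hcard
      _ = (s:ℝ≥0∞) + 1 := by push_cast; ring
  -- lower bound the partial sums of T
  have partial_ge : ∀ K, ∑ t ∈ Finset.range K, PP m n * ((n:ℝ≥0∞) / ((i0 + n + t*n : ℕ) : ℝ≥0∞))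
      ≤ ∑ r ∈ Finset.range (K+1), T r := by
    intro K
    rw [Finset.sum_range_succ']
    calc ∑ t ∈ Finset.range K, PP m n * ((n:ℝ≥0∞) / ((i0 + n + t*n : ℕ) : ℝ≥0∞))
        ≤ ∑ t ∈ Finset.range K, T (t+1) := Finset.sum_le_sum fun t _ => tail_ge t
      _ ≤ _ := le_self_add
  have hdiv : ∑' t : ℕ, PP m n * ((n:ℝ≥0∞) / ((i0 + n + t*n : ℕ) : ℝ≥0∞)) = ⊤ := by
    rw [ENNReal.tsum_mul_left, harmonic_top hn i0, ENNReal.mul_top (PP_ne_zero hm)]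
  have hE : ∑' t : ℕ, PP m n * ((n:ℝ≥0∞) / ((i0 + n + t*n : ℕ) : ℝ≥0∞))
      ≤ ∑' s : ℕ, ((s:ℝ≥0∞) + 1) * FR s := by
    rw [ENNReal.tsum_eq_iSup_nat]
    exact iSup_le fun K => le_trans (partial_ge K) (partial_le (K+1))
  rw [hdiv] at hE
  exact top_le_iff.1 hE

end Final

end Stmt6Aux

/-- for coprime positive `m, n`, the chain moving up by `n` with
probability `m/(m+n)` and down by `m` (or staying put near the boundary) with
probability `n/(m+n)` is null recurrent. -/
theorem stmt6 (M : MarkovChain) (m n : ℕ) (hm : 0 < m) (hn : 0 < n)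
    (hcop : Nat.Coprime m n)
    (hirr : M.Irreducible)
    (h_hi : ∀ i j : ℕ, m ≤ i →
      M.p i j = if j = i + n then (m : ℝ≥0∞) / ((m : ℝ≥0∞) + n)
        else if j = i - m then (n : ℝ≥0∞) / ((m : ℝ≥0∞) + n) else 0)
    (h_lo : ∀ i j : ℕ, i < m →
      M.p i j = if j = i + n then (m : ℝ≥0∞) / ((m : ℝ≥0∞) + n)
        else if j = i then (n : ℝ≥0∞) / ((m : ℝ≥0∞) + n) else 0) :
    M.NullRecurrent := by
  have hp : ∀ j k, M.p j k = if k = j + n then Stmt6Aux.PP m n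
      else if k = Stmt6Aux.dn m j then Stmt6Aux.QQ m n else 0 := by
    intro j k
    by_cases hj : j < m
    · rw [h_lo j k hj, Stmt6Aux.dn, if_pos hj]
      rfl
    · rw [h_hi j k (by omega), Stmt6Aux.dn, if_neg hj]
      rfl
  constructor
  · exact Stmt6Aux.recurrent_of M hm hn hp hirr
  · rintro ⟨-, hfin⟩
    have hfm := hfin m
    rw [Stmt6Aux.expret_top M hm hn hp hirr] at hfm
    exact absurd hfm (lt_irrefl ⊤)
end

section
/- (Transience criterion for locally regular monotone drifts) Let the chain be uniformly bounded with bound d, and suppose there exists N >= 1 such that for all i >= N: (i) gamma_i > 0; (ii) the sequence (gamma_i)_{i >= N} is non-increasing; (iii) sum_{k=0}^infinity gamma_k^2 < infinity; (iv) the local oscillation delta_i = max_{|k-i| <= d} |gamma_k^2 - gamma_i^2| satisfies d * delta_i <= (1/2) gamma_i^3. Then the chain is transient. -/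
open scoped ENNReal BigOperators
open Filter

namespace MarkovChain

variable (M : MarkovChain)

lemma p_le_one (i j : ℕ) : M.p i j ≤ 1 := (ENNReal.le_tsum j).trans (M.row_sum i).le

lemma p_ne_top (i j : ℕ) : M.p i j ≠ ⊤ :=
  ne_top_of_le_ne_top ENNReal.one_ne_top (M.p_le_one i j)

/-- Probability of ever hitting `i₀` starting from `j`. -/
noncomputable def hitProb (i₀ j : ℕ) : ℝ≥0∞ := ∑' n, M.hitAt i₀ n j

lemma hitAt_zero (i₀ j : ℕ) : M.hitAt i₀ 0 j = if j = i₀ then 1 else 0 := rfl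

lemma hitAt_succ (i₀ n j : ℕ) :
    M.hitAt i₀ (n+1) j = if j = i₀ then 0 else ∑' k, M.p j k * M.hitAt i₀ n k := rfl

lemma hitProb_self (i₀ : ℕ) : M.hitProb i₀ i₀ = 1 := by
  unfold hitProb
  rw [tsum_eq_single 0]
  · simp [hitAt_zero]
  · intro n hn
    obtain ⟨m, rfl⟩ := Nat.exists_eq_succ_of_ne_zero hn
    simp [hitAt_succ]

/-- Partial hitting probability: hit within the first `n` times. -/
noncomputable def hp (i₀ n j : ℕ) : ℝ≥0∞ := ∑ m ∈ Finset.range n, M.hitAt i₀ m j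

lemma hp_succ_ne (i₀ n j : ℕ) (hj : j ≠ i₀) :
    M.hp i₀ (n+1) j = ∑' k, M.p j k * M.hp i₀ n k := by
  unfold hp
  rw [Finset.sum_range_succ']
  simp only [hitAt_succ, hitAt_zero, if_neg hj, add_zero]
  rw [← Summable.tsum_finsetSum (fun i _ => ENNReal.summable)]
  congr 1
  ext k
  rw [Finset.mul_sum]

lemma hp_le_one (i₀ : ℕ) : ∀ n j, M.hp i₀ n j ≤ 1 := by
  intro n
  induction n with
  | zero => intro j; simp [hp]
  | succ n ih =>
    intro j
    by_cases hj : j = i₀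
    · subst hj
      unfold hp
      rw [Finset.sum_range_succ']
      simp [hitAt_succ, hitAt_zero]
    · rw [M.hp_succ_ne i₀ n j hj]
      calc ∑' k, M.p j k * M.hp i₀ n k ≤ ∑' k, M.p j k * 1 :=
            ENNReal.tsum_le_tsum fun k => mul_le_mul_right (ih k) _
        _ = 1 := by simp [M.row_sum j]

lemma hitProb_le_one (i₀ j : ℕ) : M.hitProb i₀ j ≤ 1 :=
  Summable.tsum_le_of_sum_range_le ENNReal.summable fun n => M.hp_le_one i₀ n j

/-- Supermartingale escape bound. -/
lemma escape (i₀ B : ℕ) (hi₀B : i₀ ≤ B) (G : ℕ → ℝ≥0∞)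
    (hGanti : ∀ j k : ℕ, j ≤ k → G k ≤ G j)
    (hGB0 : G B ≠ 0) (hGBtop : G B ≠ ⊤)
    (hsuper : ∀ j, B < j → ∑' k, M.p j k * G k ≤ G j) :
    ∀ j, M.hitProb i₀ j ≤ G j / G B := by
  have key : ∀ n j, M.hp i₀ n j ≤ G j / G B := by
    intro n
    induction n with
    | zero => intro j; simp [hp]
    | succ n ih =>
      intro j
      by_cases hj : j ≤ B
      · refine (M.hp_le_one i₀ (n+1) j).trans ?_
        rw [ENNReal.le_div_iff_mul_le (Or.inl hGB0) (Or.inl hGBtop), one_mul]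
        exact hGanti j B hj
      · push_neg at hj
        have hjne : j ≠ i₀ := by omega
        rw [M.hp_succ_ne i₀ n j hjne]
        calc ∑' k, M.p j k * M.hp i₀ n k
            ≤ ∑' k, M.p j k * (G k / G B) :=
              ENNReal.tsum_le_tsum fun k => mul_le_mul_right (ih k) _
          _ = (∑' k, M.p j k * G k) / G B := by
              simp only [div_eq_mul_inv, ← mul_assoc]
              exact ENNReal.tsum_mul_right
          _ ≤ G j / G B := ENNReal.div_le_div_right (hsuper j hj) _
  intro j
  exact Summable.tsum_le_of_sum_range_le ENNReal.summable fun n => key n j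

lemma hitProb_ne (i₀ j : ℕ) (hj : j ≠ i₀) :
    M.hitProb i₀ j = ∑' k, M.p j k * M.hitProb i₀ k := by
  unfold hitProb
  rw [tsum_eq_zero_add' ENNReal.summable]
  simp only [hitAt_zero, hitAt_succ, if_neg hj, zero_add]
  calc ∑' n, ∑' k, M.p j k * M.hitAt i₀ n k
      = ∑' k, ∑' n, M.p j k * M.hitAt i₀ n k := ENNReal.tsum_comm
    _ = ∑' k, M.p j k * ∑' n, M.hitAt i₀ n k :=
        tsum_congr fun k => ENNReal.tsum_mul_left

lemma return_eq (i₀ : ℕ) :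
    ∑' n, M.firstReturn i₀ n = ∑' k, M.p i₀ k * M.hitProb i₀ k := by
  unfold firstReturn hitProb
  calc ∑' n, ∑' k, M.p i₀ k * M.hitAt i₀ n k
      = ∑' k, ∑' n, M.p i₀ k * M.hitAt i₀ n k := ENNReal.tsum_comm
    _ = ∑' k, M.p i₀ k * ∑' n, M.hitAt i₀ n k :=
        tsum_congr fun k => ENNReal.tsum_mul_left

lemma aux_lt (a b x y : ℝ≥0∞) (hxy : x ≤ y) (hab : a < b)
    (h1 : a + x = 1) (h2 : b + y = 1) : False := by
  have hy : y ≤ 1 := h2 ▸ le_add_self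
  have hxt : x ≠ ⊤ := ne_top_of_le_ne_top ENNReal.one_ne_top (hxy.trans hy)
  have hlt := ENNReal.add_lt_add_of_lt_of_le hxt hab hxy
  rw [h1, h2] at hlt
  exact lt_irrefl _ hlt

lemma full_support (j k₀ : ℕ) (H : ℕ → ℝ≥0∞)
    (h1 : ∑' k, M.p j k * H k = 1) (hle : ∀ k, H k ≤ 1) (hp : M.p j k₀ ≠ 0) :
    H k₀ = 1 := by
  by_contra hne
  have hlt : H k₀ < 1 := (hle k₀).lt_of_ne hne
  have hrow := M.row_sum j
  rw [ENNReal.tsum_eq_add_tsum_ite k₀] at h1 hrow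
  have hmul : M.p j k₀ * H k₀ < M.p j k₀ := by
    simpa using ENNReal.mul_lt_mul_right hp (M.p_ne_top j k₀) hlt
  refine aux_lt _ _ _ _ ?_ hmul h1 hrow
  refine ENNReal.tsum_le_tsum fun k => ?_
  split
  · exact le_rfl
  · exact mul_le_of_le_one_right' (hle k)

lemma tsum_pos_exists {f : ℕ → ℝ≥0∞} (h : 0 < ∑' k, f k) : ∃ k, f k ≠ 0 := by
  by_contra hc
  push_neg at hc
  simp only [hc, tsum_zero, lt_irrefl] at h

lemma propagate (i₀ : ℕ) (hR : ∑' k, M.p i₀ k * M.hitProb i₀ k = 1) :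
    ∀ n j k, M.hitProb i₀ j = 1 → 0 < M.step n j k → M.hitProb i₀ k = 1 := by
  intro n
  induction n with
  | zero =>
    intro j k hj hs
    have : j = k := by
      by_contra hne
      simp [step, hne] at hs
    exact this ▸ hj
  | succ n ih =>
    intro j k hj hs
    have hs' : (0:ℝ≥0∞) < ∑' m, M.p j m * M.step n m k := hs
    obtain ⟨m, hm⟩ := tsum_pos_exists hs'
    obtain ⟨hpm, hsm⟩ := mul_ne_zero_iff.mp hm
    have hHm : M.hitProb i₀ m = 1 := by
      by_cases hji : j = i₀
      · subst hji
        exact M.full_support j m _ hR (fun k => M.hitProb_le_one j k) hpm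
      · refine M.full_support j m _ ?_ (fun k => M.hitProb_le_one i₀ k) hpm
        rw [← M.hitProb_ne i₀ j hji, hj]
    exact ih m k hHm (pos_iff_ne_zero.mpr hsm)

end MarkovChain
namespace MarkovChain

variable (M : MarkovChain)

lemma p_vanish {d : ℕ} (hub : M.UniformlyBounded d) (i j : ℕ)
    (h : j ∉ Finset.Icc (i - d) (i + d)) : M.p i j = 0 := by
  apply hub
  rw [Finset.mem_Icc] at h
  push_neg at h
  rw [lt_abs]
  omega

lemma row_sum_finset {d : ℕ} (hub : M.UniformlyBounded d) (i : ℕ) :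
    ∑ j ∈ Finset.Icc (i - d) (i + d), M.p i j = 1 := by
  rw [← M.row_sum i]
  exact (tsum_eq_sum fun b hb => M.p_vanish hub i b hb).symm

lemma q_sum {d : ℕ} (hub : M.UniformlyBounded d) (i : ℕ) :
    ∑ j ∈ Finset.Icc (i - d) (i + d), (M.p i j).toReal = 1 := by
  have h := congrArg ENNReal.toReal (M.row_sum_finset hub i)
  rwa [ENNReal.toReal_sum (fun a _ => M.p_ne_top i a), ENNReal.toReal_one] at h

lemma drift_eq_sum {d : ℕ} (hub : M.UniformlyBounded d) (i : ℕ) :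
    M.drift i = ∑ j ∈ Finset.Icc (i - d) (i + d), (M.p i j).toReal * ((j : ℝ) - i) := by
  unfold drift
  exact tsum_eq_sum fun b hb => by rw [M.p_vanish hub i b hb]; simp

end MarkovChain

/-- Tail sum of squared drifts: the Lyapunov function. -/
noncomputable def tailg (γ : ℕ → ℝ) (i : ℕ) : ℝ := ∑' m : ℕ, γ (i + m) ^ 2

section tailg

variable {γ : ℕ → ℝ}

lemma tailg_summable (hs : Summable fun k => γ k ^ 2) (i : ℕ) : Summable fun m => γ (i + m) ^ 2 := by
  have h := (summable_nat_add_iff i).mpr hs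
  simpa [add_comm] using h

lemma tailg_nonneg (i : ℕ) : 0 ≤ tailg γ i := tsum_nonneg fun m => sq_nonneg _

lemma tailg_succ (hs : Summable fun k => γ k ^ 2) (i : ℕ) : tailg γ i = γ i ^ 2 + tailg γ (i + 1) := by
  unfold tailg
  rw [Summable.tsum_eq_zero_add (tailg_summable hs i)]
  congr 1
  exact tsum_congr fun m => by rw [show i + (m + 1) = (i + 1) + m by omega]

lemma tailg_eq (hs : Summable fun k => γ k ^ 2) (i : ℕ) : ∀ j, i ≤ j →
    tailg γ i = (∑ m ∈ Finset.Ico i j, γ m ^ 2) + tailg γ j := by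
  intro j
  induction j with
  | zero =>
    intro hij
    have h0 : i = 0 := by omega
    subst h0
    simp
  | succ j ih =>
    intro hij
    rcases Nat.lt_or_ge i (j+1) with h | h
    · have hij' : i ≤ j := by omega
      rw [Finset.sum_Ico_succ_top hij', ih hij', tailg_succ hs j]
      ring
    · have : i = j + 1 := by omega
      subst this
      simp
  
lemma tailg_anti (hs : Summable fun k => γ k ^ 2) (i j : ℕ) (hij : i ≤ j) : tailg γ j ≤ tailg γ i := by
  rw [tailg_eq hs i j hij]
  have : 0 ≤ ∑ m ∈ Finset.Ico i j, γ m ^ 2 :=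
    Finset.sum_nonneg fun m _ => sq_nonneg _
  linarith

end tailg
namespace MarkovChain

lemma super_real (M : MarkovChain) {d : ℕ} (hub : M.UniformlyBounded d)
    (h_sq : Summable fun k => M.drift k ^ 2)
    {i : ℕ}
    (hpos : 0 < M.drift i)
    (hosc : (d : ℝ) * ((Finset.Icc (i - d) (i + d)).sup'
          (Finset.nonempty_Icc.mpr (by omega))
          fun k => |M.drift k ^ 2 - M.drift i ^ 2|)
        ≤ (1 / 2) * M.drift i ^ 3) :
    ∑ k ∈ Finset.Icc (i - d) (i + d), (M.p i k).toReal * tailg M.drift k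
      ≤ tailg M.drift i := by
  set γ := M.drift with hγ
  set S := Finset.Icc (i - d) (i + d) with hS
  have hne : S.Nonempty := Finset.nonempty_Icc.mpr (by omega)
  set δ := S.sup' hne (fun k => |γ k ^ 2 - γ i ^ 2|) with hδdef
  have hiS : i ∈ S := by rw [hS, Finset.mem_Icc]; omega
  have hδk : ∀ k ∈ S, |γ k ^ 2 - γ i ^ 2| ≤ δ := fun k hk =>
    Finset.le_sup' (fun k => |γ k ^ 2 - γ i ^ 2|) hk
  have hδ0 : 0 ≤ δ := le_trans (by simp) (hδk i hiS)
  have hdd : (d : ℝ) * δ ≤ (1 / 2) * γ i ^ 3 := hosc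
  have hq0 : ∀ k, 0 ≤ (M.p i k).toReal := fun k => ENNReal.toReal_nonneg
  have key : ∀ k ∈ S, tailg γ k - tailg γ i
      ≤ -(((k : ℝ) - i) * γ i ^ 2) + d * δ := by
    intro k hk
    rw [hS, Finset.mem_Icc] at hk
    rcases le_or_gt i k with h | h
    · have heq := tailg_eq h_sq i k h
      have hlow : ∀ m ∈ Finset.Ico i k, γ i ^ 2 - δ ≤ γ m ^ 2 := by
        intro m hm
        rw [Finset.mem_Ico] at hm
        have hmS : m ∈ S := by rw [hS, Finset.mem_Icc]; omega
        have habs := abs_le.mp (hδk m hmS)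
        linarith [habs.1]
      have hsum : ((k - i : ℕ) : ℝ) * (γ i ^ 2 - δ) ≤ ∑ m ∈ Finset.Ico i k, γ m ^ 2 := by
        have := Finset.card_nsmul_le_sum (Finset.Ico i k) (fun m => γ m ^ 2)
          (γ i ^ 2 - δ) hlow
        rwa [Nat.card_Ico, nsmul_eq_mul] at this
      have hki : ((k - i : ℕ) : ℝ) = (k : ℝ) - i := by
        push_cast [Nat.cast_sub h]
        ring
      have hkd : (k : ℝ) - i ≤ d := by
        have h2 : k ≤ i + d := hk.2
        have : (k : ℝ) ≤ (i : ℝ) + d := by exact_mod_cast h2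
        linarith
      have hmul : ((k : ℝ) - i) * δ ≤ (d : ℝ) * δ :=
        mul_le_mul_of_nonneg_right hkd hδ0
      rw [hki] at hsum
      nlinarith [hsum, heq, hmul]
    · have heq := tailg_eq h_sq k i h.le
      have hhigh : ∀ m ∈ Finset.Ico k i, γ m ^ 2 ≤ γ i ^ 2 + δ := by
        intro m hm
        rw [Finset.mem_Ico] at hm
        have hmS : m ∈ S := by rw [hS, Finset.mem_Icc]; omega
        have habs := abs_le.mp (hδk m hmS)
        linarith [habs.2]
      have hsum : ∑ m ∈ Finset.Ico k i, γ m ^ 2 ≤ ((i - k : ℕ) : ℝ) * (γ i ^ 2 + δ) := by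
        have := Finset.sum_le_card_nsmul (Finset.Ico k i) (fun m => γ m ^ 2)
          (γ i ^ 2 + δ) hhigh
        rwa [Nat.card_Ico, nsmul_eq_mul] at this
      have hik : ((i - k : ℕ) : ℝ) = (i : ℝ) - k := by
        push_cast [Nat.cast_sub h.le]
        ring
      have hkd : (i : ℝ) - k ≤ d := by
        have h2 : i ≤ k + d := by omega
        have : (i : ℝ) ≤ (k : ℝ) + d := by exact_mod_cast h2
        linarith
      have hmul : ((i : ℝ) - k) * δ ≤ (d : ℝ) * δ :=
        mul_le_mul_of_nonneg_right hkd hδ0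
      rw [hik] at hsum
      nlinarith [hsum, heq, hmul]
  have hqsum : ∑ k ∈ S, (M.p i k).toReal = 1 := M.q_sum hub i
  have hdrift : ∑ k ∈ S, (M.p i k).toReal * ((k : ℝ) - i) = γ i :=
    (M.drift_eq_sum hub i).symm
  have bound : ∑ k ∈ S, (M.p i k).toReal * (tailg γ k - tailg γ i)
      ≤ ∑ k ∈ S, (M.p i k).toReal * (-(((k : ℝ) - i) * γ i ^ 2) + d * δ) :=
    Finset.sum_le_sum fun k hk => mul_le_mul_of_nonneg_left (key k hk) (hq0 k)
  have expand : ∑ k ∈ S, (M.p i k).toReal * (tailg γ k - tailg γ i)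
      = (∑ k ∈ S, (M.p i k).toReal * tailg γ k) - tailg γ i := by
    have hrw : ∀ k ∈ S, (M.p i k).toReal * (tailg γ k - tailg γ i)
        = (M.p i k).toReal * tailg γ k - (M.p i k).toReal * tailg γ i := fun k _ => by ring
    rw [Finset.sum_congr rfl hrw, Finset.sum_sub_distrib, ← Finset.sum_mul, hqsum, one_mul]
  have final : ∑ k ∈ S, (M.p i k).toReal * (-(((k : ℝ) - i) * γ i ^ 2) + (d : ℝ) * δ)
      = -(γ i * γ i ^ 2) + (d : ℝ) * δ := by
    have hrw : ∀ k ∈ S, (M.p i k).toReal * (-(((k : ℝ) - i) * γ i ^ 2) + (d : ℝ) * δ)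
        = -((M.p i k).toReal * ((k : ℝ) - i) * γ i ^ 2)
          + (M.p i k).toReal * ((d : ℝ) * δ) := fun k _ => by ring
    rw [Finset.sum_congr rfl hrw, Finset.sum_add_distrib, Finset.sum_neg_distrib,
      ← Finset.sum_mul, hdrift, ← Finset.sum_mul, hqsum, one_mul]
  have hγ3 : γ i * γ i ^ 2 = γ i ^ 3 := by ring
  have hpos3 : 0 < γ i ^ 3 := pow_pos hpos 3
  linarith [bound, expand, final, hdd, hpos3]

lemma super_G (M : MarkovChain) {d : ℕ} (hub : M.UniformlyBounded d) {i : ℕ}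
    (hnn : ∀ k, 0 ≤ tailg M.drift k)
    (hreal : ∑ k ∈ Finset.Icc (i - d) (i + d), (M.p i k).toReal * tailg M.drift k
      ≤ tailg M.drift i) :
    ∑' k, M.p i k * ENNReal.ofReal (tailg M.drift k)
      ≤ ENNReal.ofReal (tailg M.drift i) := by
  rw [tsum_eq_sum (s := Finset.Icc (i - d) (i + d))
    (fun b hb => by rw [M.p_vanish hub i b hb, zero_mul])]
  have hrw : ∀ k ∈ Finset.Icc (i - d) (i + d),
      M.p i k * ENNReal.ofReal (tailg M.drift k)
        = ENNReal.ofReal ((M.p i k).toReal * tailg M.drift k) := by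
    intro k _
    rw [ENNReal.ofReal_mul ENNReal.toReal_nonneg, ENNReal.ofReal_toReal (M.p_ne_top i k)]
  rw [Finset.sum_congr rfl hrw,
    ← ENNReal.ofReal_sum_of_nonneg (fun k _ => mul_nonneg ENNReal.toReal_nonneg (hnn k))]
  exact ENNReal.ofReal_le_ofReal hreal

end MarkovChain
/-- transience criterion for locally regular monotone drifts. -/
theorem stmt8 (M : MarkovChain) (hirr : M.Irreducible) (d : ℕ)
    (hub : M.UniformlyBounded d)
    (hfin : ∀ i, M.DriftFinite i)
    (N : ℕ) (hN : 1 ≤ N)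
    (h_pos : ∀ i, N ≤ i → 0 < M.drift i)
    (h_mono : ∀ i j, N ≤ i → i ≤ j → M.drift j ≤ M.drift i)
    (h_sq : Summable fun k => (M.drift k) ^ 2)
    (h_osc : ∀ i, N ≤ i →
      (d : ℝ) * ((Finset.Icc (i - d) (i + d)).sup'
          (Finset.nonempty_Icc.mpr (by omega))
          fun k => |M.drift k ^ 2 - M.drift i ^ 2|)
        ≤ (1 / 2) * M.drift i ^ 3) :
    M.Transient := by
  intro i₀
  set γ := M.drift with hγ
  set B := max N i₀ with hB
  set G : ℕ → ℝ≥0∞ := fun j => ENNReal.ofReal (tailg γ j) with hG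
  have hnn : ∀ k, 0 ≤ tailg γ k := fun k => tailg_nonneg k
  have hGanti : ∀ j k : ℕ, j ≤ k → G k ≤ G j := fun j k hjk =>
    ENNReal.ofReal_le_ofReal (tailg_anti h_sq j k hjk)
  have hNB : N ≤ B := le_max_left _ _
  have hBpos : 0 < γ B := h_pos B hNB
  have hsucc := tailg_succ h_sq B
  have htB : 0 < tailg γ B := by
    nlinarith [tailg_nonneg (γ := γ) (B + 1), pow_pos hBpos 2]
  have hGB0 : G B ≠ 0 := (ENNReal.ofReal_pos.mpr htB).ne'
  have hGBtop : G B ≠ ⊤ := ENNReal.ofReal_ne_top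
  have hsuper : ∀ j, B < j → ∑' k, M.p j k * G k ≤ G j := by
    intro j hj
    have hNj : N ≤ j := le_trans hNB hj.le
    exact M.super_G hub hnn (M.super_real hub h_sq (h_pos j hNj) (h_osc j hNj))
  have hesc := M.escape i₀ B (le_max_right _ _) G hGanti hGB0 hGBtop hsuper
  have hlt : M.hitProb i₀ (B + 1) < 1 := by
    refine lt_of_le_of_lt (hesc (B + 1)) ?_
    rw [ENNReal.div_lt_iff (Or.inl hGB0) (Or.inl hGBtop), one_mul]
    refine (ENNReal.ofReal_lt_ofReal_iff htB).mpr ?_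
    nlinarith [pow_pos hBpos 2]
  rw [M.return_eq i₀]
  have hle1 : ∑' k, M.p i₀ k * M.hitProb i₀ k ≤ 1 := by
    calc ∑' k, M.p i₀ k * M.hitProb i₀ k ≤ ∑' k, M.p i₀ k * 1 :=
          ENNReal.tsum_le_tsum fun k => mul_le_mul_right (M.hitProb_le_one i₀ k) _
      _ = 1 := by simp [M.row_sum i₀]
  refine lt_of_le_of_ne hle1 ?_
  intro hR
  obtain ⟨n, hn⟩ := hirr i₀ (B + 1)
  have hone := M.propagate i₀ hR n i₀ (B + 1) (M.hitProb_self i₀) hn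
  rw [hone] at hlt
  exact lt_irrefl _ hlt
end

section
/- For 1/2 < alpha < 1, the Markov chain on the positive integers with p_{i,i-2} = (1/9) i^{-alpha}, p_{i,i-1} = (1/4) i^{-alpha}, p_{i,i+1} = (1/2) i^{-alpha}, and p_{i,i} = 1 - (31/36) i^{-alpha} has mean drift gamma_i = (1/36) i^{-alpha} and second-moment drift sigma_i = (43/36) i^{-alpha}; in particular sigma_i -> 0 as i -> infinity, and the chain is transient. -/
open scoped ENNReal BigOperators
open Filter

namespace MarkovChain

variable (M : MarkovChain)

lemma step_row_sum : ∀ n i, ∑' j, M.step n i j = 1 := by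
  intro n
  induction n with
  | zero =>
    intro i
    simp only [step]
    rw [tsum_eq_single i]
    · simp
    · intro b hb; simp [Ne.symm hb]
  | succ n ih =>
    intro i
    simp only [step]
    rw [ENNReal.tsum_comm]
    calc ∑' k, ∑' j, M.p i k * M.step n k j
        = ∑' k, M.p i k * ∑' j, M.step n k j := by
          congr 1; ext k; rw [ENNReal.tsum_mul_left]
      _ = ∑' k, M.p i k := by simp [ih]
      _ = 1 := M.row_sum i

lemma step_le_one (n i j : ℕ) : M.step n i j ≤ 1 := by
  rw [← M.step_row_sum n i]
  exact ENNReal.le_tsum j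

lemma step_add (m n i j : ℕ) :
    M.step (m + n) i j = ∑' k, M.step m i k * M.step n k j := by
  induction m generalizing i with
  | zero =>
    simp only [Nat.zero_add, step]
    rw [tsum_eq_single i]
    · simp
    · intro b hb; simp [Ne.symm hb]
  | succ m ih =>
    have : m + 1 + n = (m + n) + 1 := by omega
    rw [this]
    simp only [step]
    calc ∑' k, M.p i k * M.step (m + n) k j
        = ∑' k, M.p i k * ∑' l, M.step m k l * M.step n l j := by
          congr 1; ext k; rw [ih k]
      _ = ∑' k, ∑' l, M.p i k * (M.step m k l * M.step n l j) := by
          congr 1; ext k; rw [ENNReal.tsum_mul_left]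
      _ = ∑' l, (∑' k, M.p i k * M.step m k l) * M.step n l j := by
          rw [ENNReal.tsum_comm]
          congr 1; ext l
          rw [← ENNReal.tsum_mul_right]
          congr 1; ext k; ring
      _ = ∑' l, M.step (m + 1) i l * M.step n l j := rfl

end MarkovChain
namespace MarkovChain
variable (M : MarkovChain)

lemma hit_decomp (i : ℕ) : ∀ n j,
    M.step n j i = ∑ m ∈ Finset.range (n + 1), M.hitAt i m j * M.step (n - m) i i := by
  intro n
  induction n with
  | zero =>
    intro j
    rw [Nat.zero_add, Finset.range_one, Finset.sum_singleton]
    by_cases h : j = i <;> simp [h, hitAt, step]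
  | succ n ih =>
    intro j
    by_cases h : j = i
    · subst h
      rw [Finset.sum_range_succ']
      have h0 : ∀ m ∈ Finset.range (n + 1),
          M.hitAt j (m + 1) j * M.step (n + 1 - (m + 1)) j j = 0 := by
        intro m _; simp [hitAt]
      rw [Finset.sum_congr rfl h0]
      simp [hitAt]
    · have hstep : M.step (n + 1) j i = ∑' k, M.p j k * M.step n k i := rfl
      rw [hstep]
      calc ∑' k, M.p j k * M.step n k i
          = ∑' k, M.p j k * ∑ m ∈ Finset.range (n + 1),
              M.hitAt i m k * M.step (n - m) i i := by
            congr 1; ext k; rw [ih k]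
        _ = ∑' k, ∑ m ∈ Finset.range (n + 1),
              M.p j k * (M.hitAt i m k * M.step (n - m) i i) := by
            congr 1; ext k; rw [Finset.mul_sum]
        _ = ∑ m ∈ Finset.range (n + 1), ∑' k,
              M.p j k * (M.hitAt i m k * M.step (n - m) i i) := by
            rw [Summable.tsum_finsetSum]
            intro m _; exact ENNReal.summable
        _ = ∑ m ∈ Finset.range (n + 1),
              M.hitAt i (m + 1) j * M.step (n - m) i i := by
            refine Finset.sum_congr rfl fun m _ => ?_
            have : M.hitAt i (m + 1) j = ∑' k, M.p j k * M.hitAt i m k := by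
              rw [hitAt, if_neg h]
            rw [this, ← ENNReal.tsum_mul_right]
            congr 1; ext k; ring
        _ = ∑ m ∈ Finset.range (n + 2),
              M.hitAt i m j * M.step (n + 1 - m) i i := by
            conv_rhs => rw [show n + 2 = (n + 1) + 1 from rfl, Finset.sum_range_succ']
            have : M.hitAt i 0 j = 0 := if_neg h
            simp only [this, zero_mul, add_zero]
            refine Finset.sum_congr rfl fun m _ => ?_
            congr 2
            omega

lemma fr_decomp (i n : ℕ) :
    M.step (n + 1) i i
      = ∑ m ∈ Finset.range (n + 1), M.firstReturn i m * M.step (n - m) i i := by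
  have hstep : M.step (n + 1) i i = ∑' k, M.p i k * M.step n k i := rfl
  rw [hstep]
  calc ∑' k, M.p i k * M.step n k i
      = ∑' k, ∑ m ∈ Finset.range (n + 1),
          M.p i k * (M.hitAt i m k * M.step (n - m) i i) := by
        congr 1; ext k; rw [M.hit_decomp i n k, Finset.mul_sum]
    _ = ∑ m ∈ Finset.range (n + 1), ∑' k,
          M.p i k * (M.hitAt i m k * M.step (n - m) i i) := by
        rw [Summable.tsum_finsetSum]; intro m _; exact ENNReal.summable
    _ = ∑ m ∈ Finset.range (n + 1), M.firstReturn i m * M.step (n - m) i i := by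
        refine Finset.sum_congr rfl fun m _ => ?_
        rw [firstReturn, ← ENNReal.tsum_mul_right]
        congr 1; ext k; ring

end MarkovChain
namespace MarkovChain

lemma cauchy_key (a b : ℕ → ℝ≥0∞) (N : ℕ) :
    ∑ n ∈ Finset.range N, ∑ m ∈ Finset.range (n + 1), a m * b (n - m)
      = ∑ m ∈ Finset.range N, a m * ∑ l ∈ Finset.range (N - m), b l := by
  induction N with
  | zero => simp
  | succ N ih =>
    rw [Finset.sum_range_succ, ih]
    have h1 : ∀ m ∈ Finset.range (N + 1),
        a m * ∑ l ∈ Finset.range (N + 1 - m), b l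
          = a m * ∑ l ∈ Finset.range (N - m), b l + a m * b (N - m) := by
      intro m hm
      have hm' : m ≤ N := by
        simpa [Nat.lt_succ_iff] using hm
      have : N + 1 - m = (N - m) + 1 := by omega
      rw [this, Finset.sum_range_succ, mul_add]
    rw [Finset.sum_congr rfl h1, Finset.sum_add_distrib, Finset.sum_range_succ
      (fun m => a m * ∑ l ∈ Finset.range (N - m), b l)]
    simp [add_comm, add_left_comm]

lemma cauchy (a b : ℕ → ℝ≥0∞) :
    ∑' n, ∑ m ∈ Finset.range (n + 1), a m * b (n - m) = (∑' n, a n) * (∑' n, b n) := by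
  rw [ENNReal.tsum_eq_iSup_nat]
  apply le_antisymm
  · apply iSup_le
    intro N
    rw [cauchy_key]
    calc ∑ m ∈ Finset.range N, a m * ∑ l ∈ Finset.range (N - m), b l
        ≤ ∑ m ∈ Finset.range N, a m * ∑' l, b l :=
          Finset.sum_le_sum fun m _ =>
            mul_le_mul_right (ENNReal.sum_le_tsum _) _
      _ = (∑ m ∈ Finset.range N, a m) * ∑' l, b l := by rw [Finset.sum_mul]
      _ ≤ (∑' n, a n) * ∑' l, b l :=
          mul_le_mul_left (ENNReal.sum_le_tsum _) _
  · rw [ENNReal.tsum_eq_iSup_nat (f := a), ENNReal.tsum_eq_iSup_nat (f := b),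
      ENNReal.iSup_mul]
    apply iSup_le
    intro n
    rw [ENNReal.mul_iSup]
    apply iSup_le
    intro m
    refine le_trans ?_ (le_iSup (fun N => ∑ k ∈ Finset.range N,
      ∑ j ∈ Finset.range (k + 1), a j * b (k - j)) (n + m))
    rw [cauchy_key]
    calc (∑ i ∈ Finset.range n, a i) * ∑ i ∈ Finset.range m, b i
        = ∑ i ∈ Finset.range n, a i * ∑ l ∈ Finset.range m, b l := by
          rw [Finset.sum_mul]
      _ ≤ ∑ i ∈ Finset.range n, a i * ∑ l ∈ Finset.range (n + m - i), b l := by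
          refine Finset.sum_le_sum fun i hi => mul_le_mul_right ?_ _
          apply Finset.sum_le_sum_of_subset
          apply Finset.range_subset_range.2
          have : i < n := Finset.mem_range.1 hi
          omega
      _ ≤ ∑ i ∈ Finset.range (n + m), a i * ∑ l ∈ Finset.range (n + m - i), b l := by
          apply Finset.sum_le_sum_of_subset
          apply Finset.range_subset_range.2
          omega

set_option maxHeartbeats 1000000 in
lemma green (M : MarkovChain) (i : ℕ) :
    ∑' n, M.step n i i = 1 + (∑' n, M.firstReturn i n) * ∑' n, M.step n i i := by
  have h0 : M.step 0 i i = 1 := by simp [step]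
  calc ∑' n, M.step n i i
      = M.step 0 i i + ∑' n, M.step (n + 1) i i := tsum_eq_zero_add' (f := fun n => M.step n i i) ENNReal.summable
    _ = 1 + ∑' n, ∑ m ∈ Finset.range (n + 1), M.firstReturn i m * M.step (n - m) i i := by
        rw [h0]; congr 1; exact tsum_congr fun n => M.fr_decomp i n
    _ = 1 + (∑' n, M.firstReturn i n) * ∑' n, M.step n i i := by
        exact congrArg (1 + ·) (cauchy (fun m => M.firstReturn i m) (fun l => M.step l i i))

end MarkovChain
namespace MarkovChain
variable (M : MarkovChain)

lemma one_le_G (i : ℕ) : 1 ≤ ∑' n, M.step n i i := by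
  have h0 : M.step 0 i i = 1 := by simp [step]
  calc (1 : ℝ≥0∞) = M.step 0 i i := h0.symm
    _ ≤ ∑' n, M.step n i i := ENNReal.le_tsum 0

lemma R_lt_one_of_G_lt_top {i : ℕ} (hG : ∑' n, M.step n i i < ⊤) :
    ∑' n, M.firstReturn i n < 1 := by
  by_contra h
  push_neg at h
  have hgreen := M.green i
  have h1 : 1 + ∑' n, M.step n i i ≤ ∑' n, M.step n i i := by
    calc 1 + ∑' n, M.step n i i
        = 1 + 1 * ∑' n, M.step n i i := by rw [one_mul]
      _ ≤ 1 + (∑' n, M.firstReturn i n) * ∑' n, M.step n i i := by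
          gcongr
      _ = ∑' n, M.step n i i := hgreen.symm
  have h2 : ∑' n, M.step n i i < 1 + ∑' n, M.step n i i := by
    rw [add_comm]
    exact ENNReal.lt_add_right hG.ne one_ne_zero
  exact absurd (lt_of_lt_of_le h2 h1) (lt_irrefl _)

lemma G_lt_top_of_R_lt_one {i : ℕ} (hR : ∑' n, M.firstReturn i n < 1) :
    ∑' n, M.step n i i < ⊤ := by
  set R := ∑' n, M.firstReturn i n with hRdef
  have hsub : 0 < 1 - R := tsub_pos_of_lt hR
  have key : ∀ N, ∑ n ∈ Finset.range N, M.step n i i ≤ (1 - R)⁻¹ := by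
    intro N
    match N with
    | 0 => simp
    | N + 1 =>
      set S := ∑ n ∈ Finset.range (N + 1), M.step n i i with hSdef
      have hSfin : S < ⊤ := by
        calc S ≤ ∑ n ∈ Finset.range (N + 1), 1 :=
            Finset.sum_le_sum fun n _ => M.step_le_one n i i
          _ < ⊤ := by simp
      have hbnd : S ≤ 1 + R * S := by
        have h0 : M.step 0 i i = 1 := by simp [step]
        have hS1 : S = 1 + ∑ n ∈ Finset.range N, M.step (n + 1) i i := by
          rw [hSdef, Finset.sum_range_succ' (fun n => M.step n i i), h0, add_comm]
        have hA : ∑ n ∈ Finset.range N, M.step (n + 1) i i ≤ R * S := by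
          calc ∑ n ∈ Finset.range N, M.step (n + 1) i i
            = ∑ n ∈ Finset.range N, ∑ m ∈ Finset.range (n + 1),
                M.firstReturn i m * M.step (n - m) i i :=
              Finset.sum_congr rfl fun n _ => M.fr_decomp i n
          _ = ∑ m ∈ Finset.range N, M.firstReturn i m *
                ∑ l ∈ Finset.range (N - m), M.step l i i :=
              cauchy_key (fun m => M.firstReturn i m) (fun l => M.step l i i) N
          _ ≤ ∑ m ∈ Finset.range N, M.firstReturn i m * S := by
              refine Finset.sum_le_sum fun m _ => mul_le_mul_right ?_ _
              rw [hSdef]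
              apply Finset.sum_le_sum_of_subset
              apply Finset.range_subset_range.2
              omega
          _ = (∑ m ∈ Finset.range N, M.firstReturn i m) * S := by
              rw [Finset.sum_mul]
          _ ≤ R * S := mul_le_mul_left (ENNReal.sum_le_tsum _) _
        calc S = 1 + ∑ n ∈ Finset.range N, M.step (n + 1) i i := hS1
          _ ≤ 1 + R * S := add_le_add_right hA 1
      -- from S ≤ 1 + R * S deduce S ≤ (1 - R)⁻¹
      have h3 : (1 - R) * S ≤ 1 := by
        have hmul : (1 - R) * S = 1 * S - R * S :=
          ENNReal.sub_mul (fun _ _ => hSfin.ne)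
        rw [hmul, one_mul, tsub_le_iff_right]
        exact hbnd.trans (by rw [add_comm])
      have h3' : S * (1 - R) ≤ 1 := by rw [mul_comm]; exact h3
      have hfin : (1 - R) ≠ ⊤ := (lt_of_le_of_lt tsub_le_self (by simp)).ne
      have := (ENNReal.le_div_iff_mul_le (Or.inl hsub.ne') (Or.inl hfin)).2 h3'
      rwa [one_div] at this
  rw [ENNReal.tsum_eq_iSup_nat]
  calc ⨆ N, ∑ n ∈ Finset.range N, M.step n i i ≤ (1 - R)⁻¹ := iSup_le key
    _ < ⊤ := ENNReal.inv_lt_top.2 hsub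

lemma G_transfer {i j a b : ℕ} (hij : 0 < M.step a i j) (hji : 0 < M.step b j i)
    (hG : ∑' n, M.step n i i < ⊤) : ∑' n, M.step n j j < ⊤ := by
  set C := M.step a i j * M.step b j i with hC
  have hCpos : 0 < C := ENNReal.mul_pos hij.ne' hji.ne'
  have key : ∀ n, C * M.step n j j ≤ M.step (a + n + b) i i := by
    intro n
    have h1 : M.step a i j * M.step (n + b) j i ≤ M.step (a + (n + b)) i i := by
      rw [M.step_add a (n + b) i i]
      exact ENNReal.le_tsum j
    have h2 : M.step n j j * M.step b j i ≤ M.step (n + b) j i := by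
      rw [M.step_add n b j i]
      exact ENNReal.le_tsum j
    calc C * M.step n j j = M.step a i j * (M.step n j j * M.step b j i) := by
          rw [hC]; ring
      _ ≤ M.step a i j * M.step (n + b) j i := mul_le_mul_right h2 _
      _ ≤ M.step (a + (n + b)) i i := h1
      _ = M.step (a + n + b) i i := by rw [add_assoc]
  have hsum : C * ∑' n, M.step n j j ≤ ∑' n, M.step n i i := by
    rw [← ENNReal.tsum_mul_left]
    calc ∑' n, C * M.step n j j ≤ ∑' n, M.step (a + n + b) i i :=
        Summable.tsum_le_tsum key ENNReal.summable ENNReal.summable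
      _ ≤ ∑' n, M.step n i i := by
        apply ENNReal.tsum_comp_le_tsum_of_injective
          (f := fun n : ℕ => a + n + b) ?_
        intro x y hxy
        simp only [] at hxy
        omega
  by_contra h
  push_neg at h
  rw [top_le_iff.1 h, ENNReal.mul_top hCpos.ne'] at hsum
  exact absurd (lt_of_le_of_lt hsum hG) (by simp)

lemma transient_of_R_lt_one (hirr : M.Irreducible) {i0 : ℕ}
    (h : ∑' n, M.firstReturn i0 n < 1) : M.Transient := by
  intro j
  obtain ⟨a, ha⟩ := hirr j i0
  obtain ⟨b, hb⟩ := hirr i0 j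
  exact M.R_lt_one_of_G_lt_top
    (M.G_transfer hb ha (M.G_lt_top_of_R_lt_one h))

end MarkovChain
namespace MarkovChain
variable (M : MarkovChain)

lemma row_tsum {i : ℕ} (hi : 3 ≤ i)
    (hz : ∀ j : ℕ, j ≠ i - 2 → j ≠ i - 1 → j ≠ i → j ≠ i + 1 → M.p i j = 0)
    (f : ℕ → ℝ≥0∞) :
    ∑' j, M.p i j * f j
      = M.p i (i - 2) * f (i - 2) + M.p i (i - 1) * f (i - 1)
        + M.p i i * f i + M.p i (i + 1) * f (i + 1) := by
  have hs : ∀ j ∉ ({i - 2, i - 1, i, i + 1} : Finset ℕ), M.p i j * f j = 0 := by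
    intro j hj
    simp only [Finset.mem_insert, Finset.mem_singleton, not_or] at hj
    rw [hz j hj.1 hj.2.1 hj.2.2.1 hj.2.2.2, zero_mul]
  rw [tsum_eq_sum hs]
  have h1 : i - 2 ∉ ({i - 1, i, i + 1} : Finset ℕ) := by
    simp only [Finset.mem_insert, Finset.mem_singleton]; omega
  have h2 : i - 1 ∉ ({i, i + 1} : Finset ℕ) := by
    simp only [Finset.mem_insert, Finset.mem_singleton]; omega
  have h3 : i ∉ ({i + 1} : Finset ℕ) := by
    simp only [Finset.mem_singleton]; omega
  rw [Finset.sum_insert h1, Finset.sum_insert h2, Finset.sum_insert h3,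
    Finset.sum_singleton]
  ring

lemma row_tsum_real {i : ℕ} (hi : 3 ≤ i)
    (hz : ∀ j : ℕ, j ≠ i - 2 → j ≠ i - 1 → j ≠ i → j ≠ i + 1 → M.p i j = 0)
    (f : ℕ → ℝ) :
    ∑' j, (M.p i j).toReal * f j
      = (M.p i (i - 2)).toReal * f (i - 2) + (M.p i (i - 1)).toReal * f (i - 1)
        + (M.p i i).toReal * f i + (M.p i (i + 1)).toReal * f (i + 1) := by
  have hs : ∀ j ∉ ({i - 2, i - 1, i, i + 1} : Finset ℕ),
      (M.p i j).toReal * f j = 0 := by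
    intro j hj
    simp only [Finset.mem_insert, Finset.mem_singleton, not_or] at hj
    rw [hz j hj.1 hj.2.1 hj.2.2.1 hj.2.2.2]
    simp
  rw [tsum_eq_sum hs]
  have h1 : i - 2 ∉ ({i - 1, i, i + 1} : Finset ℕ) := by
    simp only [Finset.mem_insert, Finset.mem_singleton]; omega
  have h2 : i - 1 ∉ ({i, i + 1} : Finset ℕ) := by
    simp only [Finset.mem_insert, Finset.mem_singleton]; omega
  have h3 : i ∉ ({i + 1} : Finset ℕ) := by
    simp only [Finset.mem_singleton]; omega
  rw [Finset.sum_insert h1, Finset.sum_insert h2, Finset.sum_insert h3,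
    Finset.sum_singleton]
  ring

end MarkovChain
noncomputable def gfun (k : ℕ) : ℝ≥0∞ :=
  if k < 44 then 1 else ENNReal.ofReal (44 / (k : ℝ))

lemma gfun_le_one (k : ℕ) : gfun k ≤ 1 := by
  rw [gfun]
  split
  · exact le_refl 1
  · rename_i h
    push_neg at h
    apply ENNReal.ofReal_le_one.2
    rw [div_le_one (by positivity : (0:ℝ) < (k:ℝ))]
    exact_mod_cast h

lemma gfun_44 : gfun 44 = 1 := by norm_num [gfun]

lemma gfun_le_ofReal {k : ℕ} (hk : 1 ≤ k) : gfun k ≤ ENNReal.ofReal (44 / (k : ℝ)) := by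
  rw [gfun]
  split
  · rename_i h
    apply ENNReal.one_le_ofReal.2
    rw [le_div_iff₀ (by positivity : (0:ℝ) < (k:ℝ)), one_mul]
    exact_mod_cast (by omega : k ≤ 44)
  · exact le_refl _

lemma gfun_eq {k : ℕ} (hk : 44 ≤ k) : gfun k = ENNReal.ofReal (44 / (k : ℝ)) := by
  rw [gfun, if_neg (by omega)]

lemma real_ineq {x : ℝ} (hx : 45 ≤ x) {c : ℝ} (hc0 : 0 ≤ c) (hc1 : c ≤ 1) :
    1 / 9 * c * (44 / (x - 2)) + 1 / 4 * c * (44 / (x - 1))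
      + (1 - 31 / 36 * c) * (44 / x) + 1 / 2 * c * (44 / (x + 1)) ≤ 44 / x := by
  have h2 : (0:ℝ) < x - 2 := by linarith
  have h1 : (0:ℝ) < x - 1 := by linarith
  have h0 : (0:ℝ) < x := by linarith
  have hp : (0:ℝ) < x + 1 := by linarith
  have key : 1 / 9 / (x - 2) + 1 / 4 / (x - 1) + 1 / 2 / (x + 1) ≤ 31 / 36 / x := by
    rw [div_add_div _ _ h2.ne' h1.ne', div_add_div _ _ (mul_pos h2 h1).ne' hp.ne',
      div_le_div_iff₀ (by positivity) h0]
    nlinarith [sq_nonneg x, mul_pos h2 h1, mul_pos (mul_pos h2 h1) hp]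
  have expand : 1 / 9 * c * (44 / (x - 2)) + 1 / 4 * c * (44 / (x - 1))
      + (1 - 31 / 36 * c) * (44 / x) + 1 / 2 * c * (44 / (x + 1))
      = 44 / x + 44 * c * ((1 / 9 / (x - 2) + 1 / 4 / (x - 1) + 1 / 2 / (x + 1))
          - 31 / 36 / x) := by
    field_simp
    ring
  rw [expand]
  nlinarith [mul_nonneg (mul_nonneg (by norm_num : (0:ℝ) ≤ 44) hc0)
    (sub_nonneg.2 key)]
lemma superharmonic (M : MarkovChain) {α : ℝ} (hα : 0 < α)
    (htp : ∀ i : ℕ, 3 ≤ i →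
      M.p i (i - 2) = ENNReal.ofReal ((1 / 9) * (i : ℝ) ^ (-α)) ∧
      M.p i (i - 1) = ENNReal.ofReal ((1 / 4) * (i : ℝ) ^ (-α)) ∧
      M.p i (i + 1) = ENNReal.ofReal ((1 / 2) * (i : ℝ) ^ (-α)) ∧
      M.p i i = ENNReal.ofReal (1 - (31 / 36) * (i : ℝ) ^ (-α)) ∧
      ∀ j : ℕ, j ≠ i - 2 → j ≠ i - 1 → j ≠ i → j ≠ i + 1 → M.p i j = 0) :
    ∀ k : ℕ, k ≠ 44 → ∑' j, M.p k j * gfun j ≤ gfun k := by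
  intro k hk
  rcases lt_or_ge k 44 with hlt | hge
  · calc ∑' j, M.p k j * gfun j
        ≤ ∑' j, M.p k j * 1 :=
          Summable.tsum_le_tsum (fun j => mul_le_mul_right (gfun_le_one j) _)
            ENNReal.summable ENNReal.summable
      _ = 1 := by simpa using M.row_sum k
      _ = gfun k := by rw [gfun, if_pos hlt]
  · have hge45 : 45 ≤ k := by omega
    have h3 : 3 ≤ k := by omega
    obtain ⟨hp2, hp1, hpp, hp0, hz⟩ := htp k h3
    set x : ℝ := (k : ℝ) with hxdef
    have hx45 : (45 : ℝ) ≤ x := by rw [hxdef]; exact_mod_cast hge45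
    have hx1 : (1 : ℝ) ≤ x := by linarith
    set c : ℝ := x ^ (-α) with hcdef
    have hc0 : 0 ≤ c := Real.rpow_nonneg (by linarith) _
    have hc1 : c ≤ 1 := Real.rpow_le_one_of_one_le_of_nonpos hx1 (by linarith)
    have h31 : 0 ≤ 1 - 31 / 36 * c := by nlinarith
    have e2 : ((k - 2 : ℕ) : ℝ) = x - 2 := by
      rw [hxdef, Nat.cast_sub (by omega : 2 ≤ k)]; norm_num
    have e1 : ((k - 1 : ℕ) : ℝ) = x - 1 := by
      rw [hxdef, Nat.cast_sub (by omega : 1 ≤ k)]; norm_num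
    have e3 : ((k + 1 : ℕ) : ℝ) = x + 1 := by push_cast [hxdef]; ring
    rw [M.row_tsum h3 hz gfun, hp2, hp1, hpp, hp0, gfun_eq (by omega : 44 ≤ k)]
    have b2 : gfun (k - 2) ≤ ENNReal.ofReal (44 / (x - 2)) := by
      rw [← e2]; exact gfun_le_ofReal (by omega)
    have b1 : gfun (k - 1) ≤ ENNReal.ofReal (44 / (x - 1)) := by
      rw [← e1]; exact gfun_le_ofReal (by omega)
    have b3 : gfun (k + 1) ≤ ENNReal.ofReal (44 / (x + 1)) := by
      rw [gfun_eq (by omega : 44 ≤ k + 1), e3]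
    have n1 : (0:ℝ) ≤ 1 / 9 * c * (44 / (x - 2)) := by
      apply mul_nonneg (by positivity)
      apply div_nonneg (by norm_num)
      linarith
    have n2 : (0:ℝ) ≤ 1 / 4 * c * (44 / (x - 1)) := by
      apply mul_nonneg (by positivity)
      apply div_nonneg (by norm_num)
      linarith
    have n3 : (0:ℝ) ≤ (1 - 31 / 36 * c) * (44 / x) := by
      apply mul_nonneg h31
      apply div_nonneg (by norm_num)
      linarith
    have n4 : (0:ℝ) ≤ 1 / 2 * c * (44 / (x + 1)) := by
      apply mul_nonneg (by positivity)
      apply div_nonneg (by norm_num)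
      linarith
    calc ENNReal.ofReal (1 / 9 * c) * gfun (k - 2)
          + ENNReal.ofReal (1 / 4 * c) * gfun (k - 1)
          + ENNReal.ofReal (1 - 31 / 36 * c) * ENNReal.ofReal (44 / x)
          + ENNReal.ofReal (1 / 2 * c) * gfun (k + 1)
        ≤ ENNReal.ofReal (1 / 9 * c) * ENNReal.ofReal (44 / (x - 2))
          + ENNReal.ofReal (1 / 4 * c) * ENNReal.ofReal (44 / (x - 1))
          + ENNReal.ofReal (1 - 31 / 36 * c) * ENNReal.ofReal (44 / x)
          + ENNReal.ofReal (1 / 2 * c) * ENNReal.ofReal (44 / (x + 1)) := by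
          gcongr
      _ = ENNReal.ofReal (1 / 9 * c * (44 / (x - 2)) + 1 / 4 * c * (44 / (x - 1))
            + (1 - 31 / 36 * c) * (44 / x) + 1 / 2 * c * (44 / (x + 1))) := by
          rw [← ENNReal.ofReal_mul (by positivity), ← ENNReal.ofReal_mul (by positivity),
            ← ENNReal.ofReal_mul h31, ← ENNReal.ofReal_mul (by positivity),
            ← ENNReal.ofReal_add n1 n2,
            ← ENNReal.ofReal_add (by linarith) n3,
            ← ENNReal.ofReal_add (by linarith) n4]
      _ ≤ ENNReal.ofReal (44 / x) :=
          ENNReal.ofReal_le_ofReal (real_ineq hx45 hc0 hc1)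
lemma hit_bound (M : MarkovChain)
    (hsup : ∀ k : ℕ, k ≠ 44 → ∑' j, M.p k j * gfun j ≤ gfun k) :
    ∀ n k, ∑ m ∈ Finset.range n, M.hitAt 44 m k ≤ gfun k := by
  intro n
  induction n with
  | zero => intro k; simp
  | succ n ih =>
    intro k
    by_cases hk : k = 44
    · subst hk
      have hz : ∀ m ∈ Finset.range n, M.hitAt 44 (m + 1) 44 = 0 := by
        intro m _; simp [MarkovChain.hitAt]
      rw [Finset.sum_range_succ' (fun m => M.hitAt 44 m 44),
        Finset.sum_congr rfl hz]
      have : M.hitAt 44 0 44 = 1 := if_pos rfl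
      simp [this, gfun_44]
    · have h0 : M.hitAt 44 0 k = 0 := if_neg hk
      rw [Finset.sum_range_succ' (fun m => M.hitAt 44 m k), h0, add_zero]
      have hrec : ∀ m, M.hitAt 44 (m + 1) k = ∑' j, M.p k j * M.hitAt 44 m j := by
        intro m; rw [MarkovChain.hitAt, if_neg hk]
      calc ∑ m ∈ Finset.range n, M.hitAt 44 (m + 1) k
          = ∑ m ∈ Finset.range n, ∑' j, M.p k j * M.hitAt 44 m j :=
            Finset.sum_congr rfl fun m _ => hrec m
        _ = ∑' j, ∑ m ∈ Finset.range n, M.p k j * M.hitAt 44 m j :=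
            (Summable.tsum_finsetSum fun m _ => ENNReal.summable).symm
        _ = ∑' j, M.p k j * ∑ m ∈ Finset.range n, M.hitAt 44 m j := by
            congr 1; ext j; rw [Finset.mul_sum]
        _ ≤ ∑' j, M.p k j * gfun j :=
            Summable.tsum_le_tsum (fun j => mul_le_mul_right (ih j) _)
              ENNReal.summable ENNReal.summable
        _ ≤ gfun k := hsup k hk

lemma hit_tsum_le (M : MarkovChain)
    (hsup : ∀ k : ℕ, k ≠ 44 → ∑' j, M.p k j * gfun j ≤ gfun k) (k : ℕ) :
    ∑' m, M.hitAt 44 m k ≤ gfun k := by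
  rw [ENNReal.tsum_eq_iSup_nat]
  exact iSup_le fun n => hit_bound M hsup n k
lemma return_lt_one (M : MarkovChain) {α : ℝ} (hα : 0 < α)
    (htp : ∀ i : ℕ, 3 ≤ i →
      M.p i (i - 2) = ENNReal.ofReal ((1 / 9) * (i : ℝ) ^ (-α)) ∧
      M.p i (i - 1) = ENNReal.ofReal ((1 / 4) * (i : ℝ) ^ (-α)) ∧
      M.p i (i + 1) = ENNReal.ofReal ((1 / 2) * (i : ℝ) ^ (-α)) ∧
      M.p i i = ENNReal.ofReal (1 - (31 / 36) * (i : ℝ) ^ (-α)) ∧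
      ∀ j : ℕ, j ≠ i - 2 → j ≠ i - 1 → j ≠ i → j ≠ i + 1 → M.p i j = 0) :
    ∑' n, M.firstReturn 44 n < 1 := by
  have hsup := superharmonic M hα htp
  obtain ⟨hp2, hp1, hpp, hp0, hz⟩ := htp 44 (by norm_num)
  set c : ℝ := ((44 : ℕ) : ℝ) ^ (-α) with hcdef
  have hc0 : 0 ≤ c := Real.rpow_nonneg (by norm_num) _
  have hcpos : 0 < c := Real.rpow_pos_of_pos (by norm_num) _
  have hc1 : c ≤ 1 :=
    Real.rpow_le_one_of_one_le_of_nonpos (by norm_num) (by linarith)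
  have h31 : 0 ≤ 1 - 31 / 36 * c := by nlinarith
  have key : ∑' k, M.p 44 k * gfun k ≤ ENNReal.ofReal (1 - c / 90) := by
    rw [M.row_tsum (by norm_num) hz gfun, hp2, hp1, hpp, hp0]
    have g2 : gfun (44 - 2) = 1 := by norm_num [gfun]
    have g1 : gfun (44 - 1) = 1 := by norm_num [gfun]
    have g3 : gfun (44 + 1) = ENNReal.ofReal (44 / 45) := by
      norm_num [gfun]
    rw [g2, g1, g3, gfun_44, mul_one, mul_one, mul_one,
      ← ENNReal.ofReal_mul (by positivity),
      ← ENNReal.ofReal_add (by positivity) (by positivity),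
      ← ENNReal.ofReal_add (by positivity) h31,
      ← ENNReal.ofReal_add (by positivity) (by positivity)]
    apply ENNReal.ofReal_le_ofReal
    nlinarith
  calc ∑' n, M.firstReturn 44 n
      = ∑' n, ∑' k, M.p 44 k * M.hitAt 44 n k := rfl
    _ = ∑' k, ∑' n, M.p 44 k * M.hitAt 44 n k := ENNReal.tsum_comm
    _ = ∑' k, M.p 44 k * ∑' n, M.hitAt 44 n k := by
        congr 1; ext k; rw [ENNReal.tsum_mul_left]
    _ ≤ ∑' k, M.p 44 k * gfun k :=
        Summable.tsum_le_tsum (fun k => mul_le_mul_right (hit_tsum_le M hsup k) _)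
          ENNReal.summable ENNReal.summable
    _ ≤ ENNReal.ofReal (1 - c / 90) := key
    _ < 1 := by
        apply ENNReal.ofReal_lt_one.2
        linarith
lemma moments_eq (M : MarkovChain) {α : ℝ} (hα : 0 < α) {i : ℕ} (hi : 3 ≤ i)
    (hp2 : M.p i (i - 2) = ENNReal.ofReal ((1 / 9) * (i : ℝ) ^ (-α)))
    (hp1 : M.p i (i - 1) = ENNReal.ofReal ((1 / 4) * (i : ℝ) ^ (-α)))
    (hpp : M.p i (i + 1) = ENNReal.ofReal ((1 / 2) * (i : ℝ) ^ (-α)))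
    (hp0 : M.p i i = ENNReal.ofReal (1 - (31 / 36) * (i : ℝ) ^ (-α)))
    (hz : ∀ j : ℕ, j ≠ i - 2 → j ≠ i - 1 → j ≠ i → j ≠ i + 1 → M.p i j = 0) :
    M.drift i = (1 / 36) * (i : ℝ) ^ (-α) ∧
      M.secondMoment i = (43 / 36) * (i : ℝ) ^ (-α) := by
  set c : ℝ := (i : ℝ) ^ (-α) with hcdef
  have hi1 : (1 : ℝ) ≤ (i : ℝ) := by exact_mod_cast Nat.one_le_iff_ne_zero.2 (by omega)
  have hc0 : 0 ≤ c := Real.rpow_nonneg (by linarith) _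
  have hc1 : c ≤ 1 := Real.rpow_le_one_of_one_le_of_nonpos hi1 (by linarith)
  have h31 : 0 ≤ 1 - 31 / 36 * c := by nlinarith
  have t2 : (M.p i (i - 2)).toReal = 1 / 9 * c := by
    rw [hp2, ENNReal.toReal_ofReal (by positivity)]
  have t1 : (M.p i (i - 1)).toReal = 1 / 4 * c := by
    rw [hp1, ENNReal.toReal_ofReal (by positivity)]
  have tp : (M.p i (i + 1)).toReal = 1 / 2 * c := by
    rw [hpp, ENNReal.toReal_ofReal (by positivity)]
  have t0 : (M.p i i).toReal = 1 - 31 / 36 * c := by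
    rw [hp0, ENNReal.toReal_ofReal h31]
  have e2 : ((i - 2 : ℕ) : ℝ) = (i : ℝ) - 2 := by
    rw [Nat.cast_sub (by omega : 2 ≤ i)]; norm_num
  have e1 : ((i - 1 : ℕ) : ℝ) = (i : ℝ) - 1 := by
    rw [Nat.cast_sub (by omega : 1 ≤ i)]; norm_num
  constructor
  · rw [MarkovChain.drift, M.row_tsum_real hi hz (fun j => (j : ℝ) - i),
      t2, t1, tp, t0, e2, e1]
    push_cast
    ring
  · rw [MarkovChain.secondMoment, M.row_tsum_real hi hz (fun j => ((j : ℝ) - i) ^ 2),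
      t2, t1, tp, t0, e2, e1]
    push_cast
    ring
/-- the explicit lazy walk with drift `γ_i = (1/36) i^{-α}`:
its second-moment drift `σ_i = (43/36) i^{-α}` tends to 0 (so Lamperti does
not apply), yet the chain is transient. -/
theorem stmt11 (α : ℝ) (hα₁ : 1 / 2 < α) (hα₂ : α < 1)
    (M : MarkovChain) (hirr : M.Irreducible)
    (htp : ∀ i : ℕ, 3 ≤ i →
      M.p i (i - 2) = ENNReal.ofReal ((1 / 9) * (i : ℝ) ^ (-α)) ∧
      M.p i (i - 1) = ENNReal.ofReal ((1 / 4) * (i : ℝ) ^ (-α)) ∧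
      M.p i (i + 1) = ENNReal.ofReal ((1 / 2) * (i : ℝ) ^ (-α)) ∧
      M.p i i = ENNReal.ofReal (1 - (31 / 36) * (i : ℝ) ^ (-α)) ∧
      ∀ j : ℕ, j ≠ i - 2 → j ≠ i - 1 → j ≠ i → j ≠ i + 1 → M.p i j = 0) :
    (∀ i : ℕ, 3 ≤ i → M.drift i = (1 / 36) * (i : ℝ) ^ (-α)) ∧
    (∀ i : ℕ, 3 ≤ i → M.secondMoment i = (43 / 36) * (i : ℝ) ^ (-α)) ∧
    Filter.Tendsto M.secondMoment Filter.atTop (nhds 0) ∧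
    M.Transient := by
  have hα : 0 < α := by linarith
  have hmom : ∀ i : ℕ, 3 ≤ i → M.drift i = (1 / 36) * (i : ℝ) ^ (-α) ∧
      M.secondMoment i = (43 / 36) * (i : ℝ) ^ (-α) := by
    intro i hi
    obtain ⟨hp2, hp1, hpp, hp0, hz⟩ := htp i hi
    exact moments_eq M hα hi hp2 hp1 hpp hp0 hz
  refine ⟨fun i hi => (hmom i hi).1, fun i hi => (hmom i hi).2, ?_, ?_⟩
  · have h1 : Filter.Tendsto (fun i : ℕ => (43 / 36 : ℝ) * (i : ℝ) ^ (-α))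
        Filter.atTop (nhds 0) := by
      have h2 : Filter.Tendsto (fun i : ℕ => (i : ℝ) ^ (-α)) Filter.atTop (nhds 0) :=
        (tendsto_rpow_neg_atTop hα).comp tendsto_natCast_atTop_atTop
      simpa using h2.const_mul (43 / 36 : ℝ)
    apply h1.congr'
    filter_upwards [Filter.eventually_ge_atTop 3] with i hi
    exact ((hmom i hi).2).symm
  · exact M.transient_of_R_lt_one hirr (return_lt_one M hα htp)
end
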